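/- arXiv:1405.7014 — 12 statements merged into one kernel-verified Lean document; each statement's English description precedes it below -/
import Mathlib

section
/- Let Λ be an n-dimensional lattice in ℝ^m (the set of integer linear combinations of n linearly independent vectors in ℝ^m), let Vor(Λ) = {x ∈ ℝ^m : ∀ v ∈ Λ, ‖x‖ ≤ ‖x − v‖} be its Voronoi cell, let t ∈ ℝ^m and r > 0. Then the number of lattice points of Λ contained in the scaled and translated Voronoi cell r·Vor(Λ) + t is at most (⌊r⌋ + 1)^n, where ⌊r⌋ + 1 is the smallest integer strictly larger than r. -/
/-- The number of lattice points of an `n`-dimensional lattice `Λ ⊆ ℝ^m`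
inside the scaled and translated Voronoi cell `r·Vor(Λ) + t` is at most `(⌊r⌋ + 1)^n`. -/
theorem lattice_points_in_scaled_voronoi_cell
    (n m : ℕ) (b : Fin n → EuclideanSpace ℝ (Fin m))
    (hb : LinearIndependent ℝ b)
    (Λ : Set (EuclideanSpace ℝ (Fin m)))
    (hΛ : Λ = {x | ∃ u : Fin n → ℤ, x = ∑ i, (u i : ℝ) • b i})
    (Vor : Set (EuclideanSpace ℝ (Fin m)))
    (hVor : Vor = {x | ∀ v ∈ Λ, ‖x‖ ≤ ‖x - v‖})
    (t : EuclideanSpace ℝ (Fin m)) (r : ℝ) (hr : 0 < r) :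
    {x ∈ Λ | ∃ w ∈ Vor, x = r • w + t}.Finite ∧
      {x ∈ Λ | ∃ w ∈ Vor, x = r • w + t}.ncard ≤ (⌊r⌋₊ + 1) ^ n := by
  classical
  set k : ℕ := ⌊r⌋₊ + 1 with hk
  haveI : NeZero k := ⟨Nat.succ_ne_zero _⟩
  have hrk : r < (k : ℝ) := by
    have := Nat.lt_floor_add_one r
    rw [hk]; push_cast; linarith
  have hk0 : (0 : ℝ) < (k : ℝ) := lt_trans hr hrk
  set S := {x ∈ Λ | ∃ w ∈ Vor, x = r • w + t} with hS
  -- coordinate function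
  set coord : EuclideanSpace ℝ (Fin m) → (Fin n → ℤ) := fun x =>
    if h : ∃ u : Fin n → ℤ, x = ∑ i, ((u i : ℝ) • b i) then h.choose else 0 with hcoord
  have coord_spec : ∀ x ∈ Λ, x = ∑ i, ((coord x i : ℝ) • b i) := by
    intro x hx
    rw [hΛ] at hx
    have hcx : coord x = hx.choose := dif_pos hx
    rw [hcx]
    exact hx.choose_spec
  set g : EuclideanSpace ℝ (Fin m) → (Fin n → ZMod k) := fun x i => ((coord x i : ℤ) : ZMod k)
    with hg
  have hinj : Set.InjOn g S := by
    intro x hx y hy hxy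
    obtain ⟨hxΛ, w, hw, hxw⟩ := hx
    obtain ⟨hyΛ, w', hw', hyw⟩ := hy
    -- divisibility of coordinate differences
    have hdvd : ∀ i, (k : ℤ) ∣ (coord x i - coord y i) := by
      intro i
      have h1 : ((coord x i : ℤ) : ZMod k) = ((coord y i : ℤ) : ZMod k) := congrFun hxy i
      have h2 : coord x i ≡ coord y i [ZMOD (k : ℤ)] := by
        exact_mod_cast (ZMod.intCast_eq_intCast_iff _ _ _).mp h1
      exact h2.symm.dvd
    choose c hc using hdvd
    set v : EuclideanSpace ℝ (Fin m) := ∑ i, ((c i : ℝ) • b i) with hv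
    have hvΛ : v ∈ Λ := by rw [hΛ]; exact ⟨c, rfl⟩
    have hnegvΛ : -v ∈ Λ := by
      rw [hΛ]
      refine ⟨fun i => -c i, ?_⟩
      rw [hv, ← Finset.sum_neg_distrib]
      refine Finset.sum_congr rfl fun i _ => ?_
      push_cast
      rw [neg_smul]
    have hxy' : x - y = (k : ℝ) • v := by
      rw [coord_spec x hxΛ, coord_spec y hyΛ, hv, Finset.smul_sum,
        ← Finset.sum_sub_distrib]
      refine Finset.sum_congr rfl fun i _ => ?_
      rw [← sub_smul, smul_smul]
      congr 1
      have h3 : ((coord x i : ℝ)) - (coord y i : ℝ) = (k : ℝ) * (c i : ℝ) := by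
        exact_mod_cast congrArg (fun z : ℤ => (z : ℝ)) (hc i)
      exact h3
    have hxy2 : x - y = r • (w - w') := by
      rw [hxw, hyw]
      module
    have hveq : v = (r / k) • (w - w') := by
      have h4 : (k : ℝ) • v = (k : ℝ) • ((r / k) • (w - w')) := by
        rw [← hxy', hxy2, smul_smul]
        congr 1
        field_simp
      exact smul_right_injective _ (ne_of_gt hk0) h4
    set c0 : ℝ := r / k with hc0
    have hc0pos : 0 < c0 := div_pos hr hk0
    have hc0lt : c0 < 1 := (div_lt_one hk0).mpr hrk
    rw [hVor] at hw hw'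
    have h1 : ‖w‖ ≤ ‖(1 - c0) • w + c0 • w'‖ := by
      have h5 := hw v hvΛ
      have he : w - v = (1 - c0) • w + c0 • w' := by
        rw [hveq]; module
      rwa [he] at h5
    have h2 : ‖w'‖ ≤ ‖(1 - c0) • w' + c0 • w‖ := by
      have h5 := hw' (-v) hnegvΛ
      have he : w' - -v = (1 - c0) • w' + c0 • w := by
        rw [hveq]; module
      rwa [he] at h5
    have hww' : w = w' := by
      by_contra hne
      have hle1 : ‖w‖ ≤ ‖w'‖ := by
        have h6 := h1.trans (norm_add_le _ _)
        rw [norm_smul, norm_smul, Real.norm_eq_abs, Real.norm_eq_abs,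
          abs_of_pos hc0pos, abs_of_pos (by linarith : (0:ℝ) < 1 - c0)] at h6
        nlinarith
      have hle2 : ‖w'‖ ≤ ‖w‖ := by
        have h6 := h2.trans (norm_add_le _ _)
        rw [norm_smul, norm_smul, Real.norm_eq_abs, Real.norm_eq_abs,
          abs_of_pos hc0pos, abs_of_pos (by linarith : (0:ℝ) < 1 - c0)] at h6
        nlinarith
      have heq : ‖w'‖ = ‖w‖ := le_antisymm hle2 hle1
      have hlt : ‖(1 - c0) • w + c0 • w'‖ < ‖w‖ :=
        norm_combo_lt_of_ne le_rfl heq.le hne (by linarith) hc0pos (by ring)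
      exact absurd h1 (not_le.mpr hlt)
    rw [hxw, hyw, hww']
  -- counting
  have hfin : S.Finite := by
    refine Set.Finite.of_finite_image ?_ hinj
    exact Set.Finite.subset (Set.finite_univ) (Set.subset_univ _)
  refine ⟨hfin, ?_⟩
  have h1 : S.ncard = (g '' S).ncard := (Set.ncard_image_of_injOn hinj).symm
  have h2 : (g '' S).ncard ≤ (Set.univ : Set (Fin n → ZMod k)).ncard :=
    Set.ncard_le_ncard (Set.subset_univ _) Set.finite_univ
  have h3 : (Set.univ : Set (Fin n → ZMod k)).ncard = k ^ n := by
    rw [Set.ncard_univ, Nat.card_eq_fintype_card, Fintype.card_fun, ZMod.card,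
      Fintype.card_fin]
  calc S.ncard = (g '' S).ncard := h1
    _ ≤ _ := h2
    _ = k ^ n := h3
end

section
/- Let Λ be an n-dimensional lattice in ℝ^m with packing radius ρ (half the minimum Euclidean norm of a nonzero lattice point), let t ∈ ℝ^m and r > 0. Then the number of lattice points of Λ contained in the closed Euclidean ball of radius r centered at t is at most (⌊r/ρ⌋ + 1)^n, where ⌊r/ρ⌋ + 1 is the smallest integer strictly larger than r/ρ. -/
/-- The number of lattice points of an `n`-dimensional lattice `Λ ⊆ ℝ^m` with
packing radius `ρ` inside a closed ball of radius `r` centered at `t` is at most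
`(⌊r/ρ⌋ + 1)^n`. -/
theorem lattice_points_in_ball
    (n m : ℕ) (b : Fin n → EuclideanSpace ℝ (Fin m))
    (hb : LinearIndependent ℝ b)
    (Λ : Set (EuclideanSpace ℝ (Fin m)))
    (hΛ : Λ = {x | ∃ u : Fin n → ℤ, x = ∑ i, (u i : ℝ) • b i})
    (ρ : ℝ)
    (hρ : IsLeast {s : ℝ | ∃ x ∈ Λ, x ≠ 0 ∧ s = ‖x‖} (2 * ρ))
    (t : EuclideanSpace ℝ (Fin m)) (r : ℝ) (hr : 0 < r) :
    (Λ ∩ Metric.closedBall t r).Finite ∧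
      (Λ ∩ Metric.closedBall t r).ncard ≤ (⌊r / ρ⌋₊ + 1) ^ n := by
  classical
  set N : ℕ := ⌊r / ρ⌋₊ + 1 with hN
  haveI : NeZero N := ⟨Nat.succ_ne_zero _⟩
  obtain ⟨x₀, hx₀Λ, hx₀ne, hx₀⟩ := hρ.1
  have hx₀pos : 0 < ‖x₀‖ := norm_pos_iff.mpr hx₀ne
  have hρpos : 0 < ρ := by rw [← hx₀] at hx₀pos; linarith
  have hmin : ∀ z ∈ Λ, z ≠ 0 → 2 * ρ ≤ ‖z‖ := fun z hz hzne => hρ.2 ⟨z, hz, hzne, rfl⟩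
  have hNρ : r < (N : ℝ) * ρ := by
    have h1 : r / ρ < (N : ℝ) := by
      have := Nat.lt_floor_add_one (r / ρ)
      push_cast [hN]; exact this
    calc r = (r / ρ) * ρ := by field_simp
    _ < (N : ℝ) * ρ := mul_lt_mul_of_pos_right h1 hρpos
  set S : Set (EuclideanSpace ℝ (Fin m)) := Λ ∩ Metric.closedBall t r with hS
  have hcoef : ∀ x : S, ∃ u : Fin n → ℤ, (x : EuclideanSpace ℝ (Fin m)) = ∑ i, (u i : ℝ) • b i := by
    intro x
    have := x.2.1
    rw [hΛ] at this
    exact this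
  choose u hu using hcoef
  set g : S → (Fin n → ZMod N) := fun x i => ((u x i : ℤ) : ZMod N) with hg
  have hginj : Function.Injective g := by
    intro a c hac
    have hdvd : ∀ i, (N : ℤ) ∣ (u a i - u c i) := by
      intro i
      have h1 : ((u a i : ℤ) : ZMod N) = ((u c i : ℤ) : ZMod N) := congrFun hac i
      rw [ZMod.intCast_eq_intCast_iff] at h1
      exact (Int.ModEq.dvd h1.symm)
    set w : Fin n → ℤ := fun i => (u a i - u c i) / N with hw
    have hwN : ∀ i, u a i - u c i = N * w i := fun i => (Int.mul_ediv_cancel' (hdvd i)).symm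
    set z : EuclideanSpace ℝ (Fin m) := ∑ i, (w i : ℝ) • b i with hz
    have hzΛ : z ∈ Λ := by rw [hΛ]; exact ⟨w, rfl⟩
    have hdiff : (a : EuclideanSpace ℝ (Fin m)) - c = (N : ℝ) • z := by
      rw [hu a, hu c, hz, Finset.smul_sum, ← Finset.sum_sub_distrib]
      congr 1; funext i
      rw [← sub_smul, smul_smul]
      congr 1
      exact_mod_cast hwN i
    by_cases hzzero : z = 0
    · apply Subtype.ext
      have : (a : EuclideanSpace ℝ (Fin m)) - c = 0 := by rw [hdiff, hzzero, smul_zero]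
      exact sub_eq_zero.mp this
    · exfalso
      have h2ρ : 2 * ρ ≤ ‖z‖ := hmin z hzΛ hzzero
      have hnorm : ‖(a : EuclideanSpace ℝ (Fin m)) - c‖ = (N : ℝ) * ‖z‖ := by
        rw [hdiff, norm_smul, Real.norm_natCast]
      have hle : ‖(a : EuclideanSpace ℝ (Fin m)) - c‖ ≤ 2 * r := by
        have h1 : dist (a : EuclideanSpace ℝ (Fin m)) t ≤ r := Metric.mem_closedBall.mp a.2.2
        have h2 : dist (c : EuclideanSpace ℝ (Fin m)) t ≤ r := Metric.mem_closedBall.mp c.2.2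
        calc ‖(a : EuclideanSpace ℝ (Fin m)) - c‖ = dist (a : EuclideanSpace ℝ (Fin m)) c :=
              (dist_eq_norm _ _).symm
        _ ≤ dist (a : EuclideanSpace ℝ (Fin m)) t + dist t c := dist_triangle _ _ _
        _ ≤ r + r := by rw [dist_comm t c]; exact add_le_add h1 h2
        _ = 2 * r := by ring
      have hNpos : (1 : ℝ) ≤ (N : ℝ) := by exact_mod_cast Nat.one_le_iff_ne_zero.mpr (NeZero.ne N)
      nlinarith [hnorm, hle, h2ρ, hNρ, mul_le_mul_of_nonneg_left h2ρ (by positivity : (0:ℝ) ≤ (N:ℝ))]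
  haveI : Finite S := Finite.of_injective g hginj
  refine ⟨Set.finite_coe_iff.mp ‹_›, ?_⟩
  rw [← Nat.card_coe_set_eq]
  calc Nat.card S ≤ Nat.card (Fin n → ZMod N) := Nat.card_le_card_of_injective g hginj
  _ = N ^ n := by simp [Nat.card_eq_fintype_card, ZMod.card]
end

section
/- Let Λ be a lattice in ℝ^m, y ∈ ℝ^m, and x ∈ Λ. Then x is a closest lattice point to y (i.e., ‖y − x‖ ≤ ‖y − x'‖ for all x' ∈ Λ) if and only if ⟨y − x, v⟩ ≤ (1/2)⟨v, v⟩ for every relevant vector v of Λ. -/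
open scoped RealInnerProductSpace

lemma lattice_ball_finite (n m : ℕ) (b : Fin n → EuclideanSpace ℝ (Fin m))
    (hb : LinearIndependent ℝ b) (R : ℝ) :
    {x : EuclideanSpace ℝ (Fin m) |
      (∃ u : Fin n → ℤ, x = ∑ i, (u i : ℝ) • b i) ∧ ‖x‖ ≤ R}.Finite := by
  set f : (Fin n → ℝ) →ₗ[ℝ] EuclideanSpace ℝ (Fin m) := Fintype.linearCombination ℝ b with hf
  have hfap : ∀ u : Fin n → ℝ, f u = ∑ i, u i • b i := fun u => by
    simp [hf, Fintype.linearCombination_apply]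
  have hker : LinearMap.ker f = ⊥ := by
    rw [LinearMap.ker_eq_bot']
    intro u hu
    funext i
    exact Fintype.linearIndependent_iff.mp hb u (by rw [← hfap]; exact hu) i
  obtain ⟨K, hK, hant⟩ := f.exists_antilipschitzWith hker
  set N : ℤ := ⌈(K : ℝ) * R⌉ with hN
  have hsub : {x : EuclideanSpace ℝ (Fin m) |
      (∃ u : Fin n → ℤ, x = ∑ i, (u i : ℝ) • b i) ∧ ‖x‖ ≤ R} ⊆
      (fun u : Fin n → ℤ => ∑ i, (u i : ℝ) • b i) ''
        (Set.pi Set.univ fun _ : Fin n => Set.Icc (-N) N) := by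
    rintro x ⟨⟨u, rfl⟩, hxR⟩
    refine ⟨u, ?_, rfl⟩
    intro i _
    have h1 : ‖(fun i => (u i : ℝ))‖ ≤ K * R := by
      have := hant.le_mul_dist (fun i => (u i : ℝ)) 0
      simp only [dist_zero_right] at this
      calc ‖(fun i => (u i : ℝ))‖ ≤ K * ‖f fun i => (u i : ℝ)‖ := by
            simpa [dist_eq_norm] using this
        _ ≤ K * R := by
            rw [hfap]
            exact mul_le_mul_of_nonneg_left hxR (by positivity)
    have h2 : |(u i : ℝ)| ≤ K * R := by
      calc |(u i : ℝ)| = ‖(fun i => (u i : ℝ)) i‖ := by simp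
        _ ≤ ‖(fun i => (u i : ℝ))‖ := norm_le_pi_norm (fun i => (u i : ℝ)) i
        _ ≤ K * R := h1
    have h3 : |u i| ≤ N := by
      have : (|u i| : ℝ) ≤ (N : ℝ) := by
        exact le_trans h2 (Int.le_ceil _)
      exact_mod_cast this
    exact Set.mem_Icc.mpr (abs_le.mp h3)
  exact Set.Finite.subset (Set.Finite.image _ (Set.Finite.pi fun _ => Set.finite_Icc _ _)) hsub

/-- `x ∈ Λ` is a closest lattice point to `y` if and only if
`⟨y − x, v⟩ ≤ (1/2)⟨v, v⟩` for every relevant vector `v` of `Λ`. -/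
theorem closest_point_iff_relevant_vectors
    (n m : ℕ) (b : Fin n → EuclideanSpace ℝ (Fin m))
    (hb : LinearIndependent ℝ b)
    (Λ : Set (EuclideanSpace ℝ (Fin m)))
    (hΛ : Λ = {x | ∃ u : Fin n → ℤ, x = ∑ i, (u i : ℝ) • b i})
    (y x : EuclideanSpace ℝ (Fin m)) (hx : x ∈ Λ) :
    (∀ x' ∈ Λ, ‖y - x‖ ≤ ‖y - x'‖) ↔
      (∀ v : EuclideanSpace ℝ (Fin m),
        (v ∈ Λ ∧ v ≠ 0 ∧ ∀ w ∈ Λ, ⟪v, w⟫ ≤ ⟪w, w⟫) →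
        ⟪y - x, v⟫ ≤ (1 / 2) * ⟪v, v⟫) := by
  -- Λ is closed under addition and subtraction
  have hadd : ∀ w ∈ Λ, ∀ w' ∈ Λ, w + w' ∈ Λ := by
    rw [hΛ]
    rintro w ⟨u, rfl⟩ w' ⟨u', rfl⟩
    exact ⟨u + u', by simp [add_smul, Finset.sum_add_distrib]⟩
  have hsub : ∀ w ∈ Λ, ∀ w' ∈ Λ, w - w' ∈ Λ := by
    rw [hΛ]
    rintro w ⟨u, rfl⟩ w' ⟨u', rfl⟩
    exact ⟨u - u', by simp [sub_smul, Finset.sum_sub_distrib]⟩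
  set z := y - x with hz
  constructor
  · rintro h v ⟨hvΛ, -, -⟩
    have h1 := h (x + v) (hadd x hx v hvΛ)
    have h2 : y - (x + v) = z - v := by rw [hz]; abel
    rw [h2] at h1
    have h3 : ‖z‖ ^ 2 ≤ ‖z - v‖ ^ 2 := by
      apply pow_le_pow_left₀ (norm_nonneg _) h1
    have h4 : ‖z - v‖ ^ 2 = ‖z‖ ^ 2 - 2 * ⟪z, v⟫ + ‖v‖ ^ 2 := by
      rw [@norm_sub_sq_real]
    have h5 : ⟪v, v⟫ = ‖v‖ ^ 2 := real_inner_self_eq_norm_sq v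
    nlinarith
  · intro h x' hx'
    -- suffices: ⟪z, w⟫ ≤ ½⟪w,w⟫ for all w ∈ Λ
    suffices hS : ∀ w ∈ Λ, ⟪z, w⟫ ≤ (1 / 2) * ⟪w, w⟫ by
      have hw := hS (x' - x) (hsub x' hx' x hx)
      have h2 : y - x' = z - (x' - x) := by rw [hz]; abel
      rw [h2]
      have h4 : ‖z - (x' - x)‖ ^ 2 = ‖z‖ ^ 2 - 2 * ⟪z, x' - x⟫ + ‖x' - x‖ ^ 2 := by
        rw [@norm_sub_sq_real]
      have h5 : ⟪x' - x, x' - x⟫ = ‖x' - x‖ ^ 2 := real_inner_self_eq_norm_sq _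
      nlinarith [norm_nonneg (z - (x' - x)), norm_nonneg z]
    by_contra hcon
    push_neg at hcon
    -- the set of violating lattice vectors
    set S : Set (EuclideanSpace ℝ (Fin m)) :=
      {w | w ∈ Λ ∧ (1 / 2) * ⟪w, w⟫ < ⟪z, w⟫} with hSdef
    have hSne : S.Nonempty := by
      obtain ⟨w, hwΛ, hw⟩ := hcon
      exact ⟨w, hwΛ, hw⟩
    -- S is finite
    have hSfin : S.Finite := by
      apply Set.Finite.subset (lattice_ball_finite n m b hb (2 * ‖z‖))
      rintro w ⟨hwΛ, hw⟩
      refine ⟨by rw [hΛ] at hwΛ; exact hwΛ, ?_⟩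
      have h5 : ⟪w, w⟫ = ‖w‖ ^ 2 := real_inner_self_eq_norm_sq _
      have h6 : ⟪z, w⟫ ≤ ‖z‖ * ‖w‖ := real_inner_le_norm z w
      nlinarith [norm_nonneg w, norm_nonneg z]
    -- pick w of minimal norm in S
    obtain ⟨w, hwS, hwmin⟩ := Set.exists_min_image S (fun w => ‖w‖) hSfin hSne
    obtain ⟨hwΛ, hwlt⟩ := hwS
    have hw0 : w ≠ 0 := by
      rintro rfl
      simp at hwlt
    -- w is relevant
    have hrel : ∀ u ∈ Λ, ⟪w, u⟫ ≤ ⟪u, u⟫ := by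
      intro u huΛ
      by_contra hcu
      push_neg at hcu
      have hu0 : u ≠ 0 := by rintro rfl; simp at hcu
      have hwu : w - u ∈ Λ := hsub w hwΛ u huΛ
      have e1 : ⟪w - u, w - u⟫ = ⟪w, w⟫ - 2 * ⟪w, u⟫ + ⟪u, u⟫ := by
        simp only [inner_sub_left, inner_sub_right]
        rw [real_inner_comm u w]; ring
      have e2 : ⟪z, w - u⟫ = ⟪z, w⟫ - ⟪z, u⟫ := inner_sub_right z w u
      -- either u or w - u is in S, with smaller norm
      have hnu : ‖u‖ < ‖w‖ := by
        have h5 : ⟪u, u⟫ = ‖u‖ ^ 2 := real_inner_self_eq_norm_sq _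
        have h6 : ⟪w, u⟫ ≤ ‖w‖ * ‖u‖ := real_inner_le_norm w u
        have hun : 0 < ‖u‖ := norm_pos_iff.mpr hu0
        nlinarith
      have hnwu : ‖w - u‖ < ‖w‖ := by
        have h5 : ⟪u, u⟫ = ‖u‖ ^ 2 := real_inner_self_eq_norm_sq _
        have h5' : ⟪w, w⟫ = ‖w‖ ^ 2 := real_inner_self_eq_norm_sq _
        have h5'' : ⟪w - u, w - u⟫ = ‖w - u‖ ^ 2 := real_inner_self_eq_norm_sq _
        have hun : 0 < ‖u‖ := norm_pos_iff.mpr hu0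
        nlinarith [norm_nonneg (w - u), norm_nonneg w]
      have hcase : (1 / 2) * ⟪u, u⟫ < ⟪z, u⟫ ∨ (1 / 2) * ⟪w - u, w - u⟫ < ⟪z, w - u⟫ := by
        by_contra hc
        push_neg at hc
        obtain ⟨hc1, hc2⟩ := hc
        rw [e1] at hc2
        rw [e2] at hc2
        nlinarith
      rcases hcase with hcase | hcase
      · exact absurd (hwmin u ⟨huΛ, hcase⟩) (not_le.mpr hnu)
      · exact absurd (hwmin (w - u) ⟨hwu, hcase⟩) (not_le.mpr hnwu)
    exact absurd (h w ⟨hwΛ, hw0, hrel⟩) (not_le.mpr hwlt)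
end

section
/- Let b_1, …, b_{n+1} ∈ ℝ^m satisfy b_1 + ⋯ + b_{n+1} = 0, let B denote the linear map sending p ∈ ℝ^{n+1} to ∑_{i=1}^{n+1} p_i b_i, and let q_{ij} = ⟨b_i, b_j⟩. Then for every p ∈ ℝ^{n+1} and every subset S of {1, …, n+1}: ‖Bp‖² − ‖B(p + 1_S)‖² = Φ(S, p), where Φ(S, p) = ∑_{i ∈ S} ∑_{j ∉ S} q_{ij}(1 + 2p_i − 2p_j). -/
open scoped RealInnerProductSpace

/-- Lemma, part 1: if `b_1 + ⋯ + b_{n+1} = 0` then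
`‖Bp‖² − ‖B(p + 1_S)‖² = Φ(S, p) = ∑_{i ∈ S} ∑_{j ∉ S} q_{ij}(1 + 2p_i − 2p_j)`. -/
theorem norm_sq_diff_add_indicator
    (n m : ℕ) (b : Fin (n + 1) → EuclideanSpace ℝ (Fin m))
    (hsum : ∑ i, b i = 0)
    (p : Fin (n + 1) → ℝ) (S : Finset (Fin (n + 1))) :
    ‖∑ i, p i • b i‖ ^ 2 -
        ‖∑ i, (p i + if i ∈ S then (1 : ℝ) else 0) • b i‖ ^ 2 =
      ∑ i ∈ S, ∑ j ∈ Sᶜ, ⟪b i, b j⟫ * (1 + 2 * p i - 2 * p j) := by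
  set u : EuclideanSpace ℝ (Fin m) := ∑ i ∈ S, b i with hu
  set v : EuclideanSpace ℝ (Fin m) := ∑ i, p i • b i with hv
  set w : EuclideanSpace ℝ (Fin m) := ∑ i ∈ S, p i • b i with hw
  have hSc : ∑ j ∈ Sᶜ, b j = -u := by
    have h := Finset.sum_add_sum_compl S b
    rw [hsum, ← hu] at h
    exact eq_neg_of_add_eq_zero_right h
  have hScp : ∑ j ∈ Sᶜ, p j • b j = v - w := by
    have h := Finset.sum_add_sum_compl S (fun i => p i • b i)
    rw [← hv, ← hw] at h
    exact eq_sub_of_add_eq' h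
  have hsplit : ∑ i, (p i + if i ∈ S then (1 : ℝ) else 0) • b i = v + u := by
    simp only [add_smul, Finset.sum_add_distrib, ← hv, ite_smul, one_smul, zero_smul]
    congr 1
    rw [hu, Finset.sum_ite_mem, Finset.univ_inter]
  have e1 : ⟪u, (-u : EuclideanSpace ℝ (Fin m))⟫ = ∑ i ∈ S, ∑ j ∈ Sᶜ, ⟪b i, b j⟫ := by
    rw [← hSc, hu]
    simp only [sum_inner, inner_sum]
    rw [Finset.sum_comm]
  have e2 : ⟪w, (-u : EuclideanSpace ℝ (Fin m))⟫ = ∑ i ∈ S, ∑ j ∈ Sᶜ, p i * ⟪b i, b j⟫ := by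
    rw [← hSc, hw]
    simp only [sum_inner, inner_sum, real_inner_smul_left]
    rw [Finset.sum_comm]
  have e3 : ⟪u, v - w⟫ = ∑ i ∈ S, ∑ j ∈ Sᶜ, p j * ⟪b i, b j⟫ := by
    rw [← hScp, hu]
    simp only [sum_inner, inner_sum, real_inner_smul_right]
    rw [Finset.sum_comm]
  have hR : ∑ i ∈ S, ∑ j ∈ Sᶜ, ⟪b i, b j⟫ * (1 + 2 * p i - 2 * p j)
      = (∑ i ∈ S, ∑ j ∈ Sᶜ, ⟪b i, b j⟫)
        + 2 * (∑ i ∈ S, ∑ j ∈ Sᶜ, p i * ⟪b i, b j⟫)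
        - 2 * (∑ i ∈ S, ∑ j ∈ Sᶜ, p j * ⟪b i, b j⟫) := by
    simp only [Finset.mul_sum, ← Finset.sum_add_distrib, ← Finset.sum_sub_distrib]
    exact Finset.sum_congr rfl fun i _ => Finset.sum_congr rfl fun j _ => by ring
  rw [hsplit, norm_add_sq_real, hR, ← e1, ← e2, ← e3]
  have c1 : ⟪w, u⟫ = ⟪u, w⟫ := real_inner_comm _ _
  have c2 : ⟪u, v⟫ = ⟪v, u⟫ := real_inner_comm _ _
  have c3 : ⟪u, u⟫ = ‖u‖ ^ 2 := real_inner_self_eq_norm_sq u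
  simp only [inner_neg_right, inner_sub_right]
  linarith
end

section
/- Let b_1, …, b_{n+1} ∈ ℝ^m satisfy b_1 + ⋯ + b_{n+1} = 0, let B denote the linear map sending p ∈ ℝ^{n+1} to ∑_{i=1}^{n+1} p_i b_i, and let q_{ij} = ⟨b_i, b_j⟩. Then for every p ∈ ℝ^{n+1} and every subset S of {1, …, n+1}: ‖Bp‖² − ‖B(p − 1_S)‖² = Φ(S̄, p), where S̄ is the complement of S in {1, …, n+1} and Φ(T, p) = ∑_{i ∈ T} ∑_{j ∉ T} q_{ij}(1 + 2p_i − 2p_j). -/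
open scoped RealInnerProductSpace

/-- Lemma, part 2: if `b_1 + ⋯ + b_{n+1} = 0` then
`‖Bp‖² − ‖B(p − 1_S)‖² = Φ(S̄, p)` where `S̄` is the complement of `S`. -/
theorem norm_sq_diff_sub_indicator
    (n m : ℕ) (b : Fin (n + 1) → EuclideanSpace ℝ (Fin m))
    (hsum : ∑ i, b i = 0)
    (p : Fin (n + 1) → ℝ) (S : Finset (Fin (n + 1))) :
    ‖∑ i, p i • b i‖ ^ 2 -
        ‖∑ i, (p i - if i ∈ S then (1 : ℝ) else 0) • b i‖ ^ 2 =
      ∑ i ∈ Sᶜ, ∑ j ∈ Sᶜᶜ, ⟪b i, b j⟫ * (1 + 2 * p i - 2 * p j) := by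
  classical
  set s : EuclideanSpace ℝ (Fin m) := ∑ i ∈ S, b i with hs
  set vS : EuclideanSpace ℝ (Fin m) := ∑ i ∈ S, p i • b i with hvS
  set vT : EuclideanSpace ℝ (Fin m) := ∑ i ∈ Sᶜ, p i • b i with hvT
  have hsc : ∑ i ∈ Sᶜ, b i = -s := by
    have h := Finset.sum_add_sum_compl S b
    rw [hsum] at h
    exact eq_neg_of_add_eq_zero_right h
  have hv : ∑ i, p i • b i = vS + vT := (Finset.sum_add_sum_compl S _).symm
  have h2 : ∑ i, (p i - if i ∈ S then (1 : ℝ) else 0) • b i = (vS + vT) - s := by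
    simp only [sub_smul, Finset.sum_sub_distrib, ite_smul, one_smul, zero_smul,
      Finset.sum_ite_mem, Finset.univ_inter, hv, hs]
  -- component sums
  have hA : ∑ i ∈ Sᶜ, ∑ j ∈ S, ⟪b i, b j⟫ = ⟪-s, s⟫ := by
    simp only [← inner_sum, ← sum_inner, hsc, hs]
  have hB : ∑ i ∈ Sᶜ, ∑ j ∈ S, p i * ⟪b i, b j⟫ = ⟪vT, s⟫ := by
    simp only [← Finset.mul_sum, ← inner_sum, ← real_inner_smul_left, ← sum_inner, hvT, hs]
  have hC : ∑ i ∈ Sᶜ, ∑ j ∈ S, p j * ⟪b i, b j⟫ = ⟪-s, vS⟫ := by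
    simp only [← real_inner_smul_right, ← inner_sum, ← sum_inner, hsc, hvS]
  have hR : ∑ i ∈ Sᶜ, ∑ j ∈ Sᶜᶜ, ⟪b i, b j⟫ * (1 + 2 * p i - 2 * p j) =
      ⟪-s, s⟫ + 2 * ⟪vT, s⟫ - 2 * ⟪-s, vS⟫ := by
    rw [compl_compl, ← hA, ← hB, ← hC, Finset.mul_sum, Finset.mul_sum,
      ← Finset.sum_add_distrib, ← Finset.sum_sub_distrib]
    refine Finset.sum_congr rfl fun i _ => ?_
    rw [Finset.mul_sum, Finset.mul_sum, ← Finset.sum_add_distrib, ← Finset.sum_sub_distrib]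
    exact Finset.sum_congr rfl fun j _ => by ring
  rw [h2, hR, hv, norm_sub_sq_real]
  simp only [inner_neg_left, inner_add_left, inner_add_right, real_inner_self_eq_norm_sq,
    real_inner_comm vT s, real_inner_comm vS s]
  ring
end

section
/- Let p ∈ ℝ^{n+1} and suppose S is a nonempty subset of {1, …, n+1} with min{p_i : i ∈ S} − max{p_j : j ∉ S} ≥ 2 that is maximal with this property (so S contains every index i with p_i = max(p)). Then rng(p − 1_S) = rng(p) − 1. -/
/-- if `S` is a nonempty (proper) subset of the indices with
`min{p_i : i ∈ S} − max{p_j : j ∉ S} ≥ 2` that is inclusion-maximal with this property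
(so `S` contains every index attaining `max(p)`), then `rng(p − 1_S) = rng(p) − 1`. -/
theorem rng_decrng_eq_rng_sub_one
    (n : ℕ) (p : Fin (n + 1) → ℝ) (S : Finset (Fin (n + 1)))
    (hne : S.Nonempty) (hproper : S ≠ Finset.univ)
    (hgap : ∀ i ∈ S, ∀ j ∉ S, p j + 2 ≤ p i)
    (hmaximal : ∀ T : Finset (Fin (n + 1)), T ≠ Finset.univ →
      (∀ i ∈ T, ∀ j ∉ T, p j + 2 ≤ p i) → T ⊆ S)
    (hargmax : ∀ i, p i = Finset.univ.sup' Finset.univ_nonempty p → i ∈ S) :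
    Finset.univ.sup' Finset.univ_nonempty (fun i => p i - if i ∈ S then 1 else 0) -
        Finset.univ.inf' Finset.univ_nonempty (fun i => p i - if i ∈ S then 1 else 0) =
      (Finset.univ.sup' Finset.univ_nonempty p -
        Finset.univ.inf' Finset.univ_nonempty p) - 1 := by
  obtain ⟨i₀, -, hi₀⟩ := Finset.exists_mem_eq_sup' Finset.univ_nonempty p
  obtain ⟨j₀, -, hj₀⟩ := Finset.exists_mem_eq_inf' Finset.univ_nonempty p
  have hi₀S : i₀ ∈ S := hargmax i₀ hi₀.symm
  obtain ⟨j₁, hj₁⟩ : ∃ j, j ∉ S := by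
    by_contra h
    push_neg at h
    exact hproper (Finset.eq_univ_iff_forall.2 h)
  have hj₀S : j₀ ∉ S := by
    intro hj₀S
    have h1 := hgap j₀ hj₀S j₁ hj₁
    have h2 : p j₀ ≤ p j₁ := hj₀ ▸ Finset.inf'_le _ (Finset.mem_univ j₁)
    linarith
  have hsup : Finset.univ.sup' Finset.univ_nonempty
      (fun i => p i - if i ∈ S then 1 else 0) =
      Finset.univ.sup' Finset.univ_nonempty p - 1 := by
    apply le_antisymm
    · apply Finset.sup'_le
      intro i _
      by_cases hi : i ∈ S
      · simp only [hi, if_pos]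
        have : p i ≤ Finset.univ.sup' Finset.univ_nonempty p :=
          Finset.le_sup' _ (Finset.mem_univ i)
        linarith
      · simp only [hi, if_neg, not_false_iff]
        have := hgap i₀ hi₀S i hi
        have : p i₀ ≤ Finset.univ.sup' Finset.univ_nonempty p :=
          Finset.le_sup' _ (Finset.mem_univ i₀)
        have := hgap i₀ hi₀S i hi
        linarith
    · have := Finset.le_sup' (fun i => p i - if i ∈ S then (1:ℝ) else 0)
        (Finset.mem_univ i₀)
      simp only [hi₀S, if_pos] at this
      linarith [hi₀ ▸ this]
  have hinf : Finset.univ.inf' Finset.univ_nonempty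
      (fun i => p i - if i ∈ S then 1 else 0) =
      Finset.univ.inf' Finset.univ_nonempty p := by
    apply le_antisymm
    · have := Finset.inf'_le (fun i => p i - if i ∈ S then (1:ℝ) else 0)
        (Finset.mem_univ j₀)
      simp only [hj₀S, if_neg, not_false_iff] at this
      linarith [hj₀ ▸ this]
    · apply Finset.le_inf'
      intro i _
      have hle : Finset.univ.inf' Finset.univ_nonempty p ≤ p i :=
        Finset.inf'_le _ (Finset.mem_univ i)
      by_cases hi : i ∈ S
      · simp only [hi, if_pos]
        have hg := hgap i hi j₁ hj₁
        have : Finset.univ.inf' Finset.univ_nonempty p ≤ p j₁ :=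
          Finset.inf'_le _ (Finset.mem_univ j₁)
        linarith
      · simp only [hi, if_neg, not_false_iff]
        linarith
  rw [hsup, hinf]
  ring
end

section
/- Let p ∈ ℝ^{n+1} and define the sequence d_0, d_1, d_2, … by d_0 = p and d_{k+1} = decrng(d_k). Then there exists a finite integer T such that d_k = d_T for all k ≥ T. -/
open scoped Classical

/-- `subr p` is the largest (inclusion-maximal) proper subset `S` of the indices with
`min{p_i : i ∈ S} − max{p_j : j ∉ S} ≥ 2` (equivalently `∀ i ∈ S, ∀ j ∉ S, p j + 2 ≤ p i`),
or `∅` if no such nonempty subset exists.  (All subsets with this property are totally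
ordered by inclusion, so their union — computed here as a `Finset.sup` — is the largest.) -/
noncomputable def subr {n : ℕ} (p : Fin (n + 1) → ℝ) : Finset (Fin (n + 1)) :=
  Finset.sup
    ((Finset.univ : Finset (Finset (Fin (n + 1)))).filter
      (fun T => T ≠ Finset.univ ∧ ∀ i ∈ T, ∀ j ∉ T, p j + 2 ≤ p i)) id

/-- `decrng p = p − 1_{subr p}` decrements the entries of `p` indexed by `subr p`. -/
noncomputable def decrng {n : ℕ} (p : Fin (n + 1) → ℝ) : Fin (n + 1) → ℝ :=
  fun i => p i - if i ∈ subr p then 1 else 0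

lemma subr_spec {n : ℕ} (p : Fin (n + 1) → ℝ) :
    subr p ≠ Finset.univ ∧ ∀ i ∈ subr p, ∀ j ∉ subr p, p j + 2 ≤ p i := by
  classical
  set F := ((Finset.univ : Finset (Finset (Fin (n + 1)))).filter
      (fun T => T ≠ Finset.univ ∧ ∀ i ∈ T, ∀ j ∉ T, p j + 2 ≤ p i)) with hF
  by_cases hFe : F = ∅
  · have : subr p = ∅ := by
      rw [subr, ← hF, hFe]; rfl
    rw [this]
    constructor
    · intro h
      have : (0 : Fin (n + 1)) ∈ (∅ : Finset (Fin (n + 1))) := h ▸ Finset.mem_univ 0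
      simp at this
    · intro i hi; simp at hi
  · have hFne : F.Nonempty := Finset.nonempty_iff_ne_empty.mpr hFe
    obtain ⟨M, hM, hMmax⟩ : ∃ M ∈ F, ∀ x ∈ F, ¬ M < x := by
      obtain ⟨M, hM⟩ := Finset.exists_maximal hFne
      exact ⟨M, hM.1, fun x hx hlt => hlt.not_ge (hM.2 hx hlt.le)⟩
    have hMF := hM
    rw [hF, Finset.mem_filter] at hMF
    obtain ⟨-, hMne, hMprop⟩ := hMF
    -- every element of F is ⊆ M
    have hub : ∀ A ∈ F, A ⊆ M := by
      intro A hA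
      have hAF := hA
      rw [hF, Finset.mem_filter] at hAF
      obtain ⟨-, hAne, hAprop⟩ := hAF
      by_contra hnsub
      obtain ⟨i, hiA, hiM⟩ := Finset.not_subset.mp hnsub
      by_cases hMA : M ⊆ A
      · rcases lt_or_eq_of_le (Finset.le_iff_subset.mpr hMA) with hss | heq
        · exact hMmax A hA hss
        · exact hiM (heq ▸ hiA)
      · obtain ⟨j, hjM, hjA⟩ := Finset.not_subset.mp hMA
        have h1 := hAprop i hiA j hjA
        have h2 := hMprop j hjM i hiM
        linarith
    have hsub : subr p = M := by
      apply le_antisymm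
      · rw [subr, ← hF]
        exact Finset.sup_le hub
      · rw [subr, ← hF]
        exact Finset.le_sup (f := id) hM
    rw [hsub]
    exact ⟨hMne, hMprop⟩

/-- the sequence `d_0 = p`, `d_{k+1} = decrng(d_k)` is eventually constant. -/
theorem decrng_iteration_stabilizes
    (n : ℕ) (p : Fin (n + 1) → ℝ) (d : ℕ → Fin (n + 1) → ℝ)
    (hd0 : d 0 = p) (hd : ∀ k, d (k + 1) = decrng (d k)) :
    ∃ T : ℕ, ∀ k ≥ T, d k = d T := by
  -- First find T with subr (d T) = ∅
  have hfix : ∀ q : Fin (n + 1) → ℝ, subr q = ∅ → decrng q = q := by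
    intro q h
    funext i
    simp [decrng, h]
  have key : ∃ T, subr (d T) = ∅ := by
    by_contra h
    push_neg at h
    -- lower bound
    obtain ⟨m, hm⟩ : ∃ m : ℝ, ∀ i, m ≤ p i := by
      refine ⟨Finset.univ.inf' Finset.univ_nonempty p, fun i => ?_⟩
      exact Finset.inf'_le _ (Finset.mem_univ i)
    have hlow : ∀ k i, m ≤ d k i := by
      intro k
      induction k with
      | zero => intro i; rw [hd0]; exact hm i
      | succ k ih =>
        intro i
        rw [hd k]
        by_cases hi : i ∈ subr (d k)
        · obtain ⟨hne, hprop⟩ := subr_spec (d k)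
          obtain ⟨j, hj⟩ : ∃ j, j ∉ subr (d k) := by
            by_contra hc
            push_neg at hc
            exact hne (Finset.eq_univ_of_forall hc)
          have := hprop i hi j hj
          have := ih j
          simp only [decrng, hi, if_pos]
          linarith
        · simp only [decrng, hi, if_neg, not_false_iff]
          simpa using ih i
    -- sum decreases
    have hsum : ∀ q : Fin (n + 1) → ℝ,
        ∑ i, decrng q i = (∑ i, q i) - (subr q).card := by
      intro q
      simp only [decrng, Finset.sum_sub_distrib]
      congr 1
      simp [Finset.sum_ite_mem]
    have hdec : ∀ k, ∑ i, d (k + 1) i ≤ (∑ i, d k i) - 1 := by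
      intro k
      rw [hd k, hsum]
      have : 1 ≤ (subr (d k)).card := Finset.card_pos.mpr
        (h k)
      have : (1 : ℝ) ≤ (subr (d k)).card := by exact_mod_cast this
      linarith
    have hk : ∀ k : ℕ, ∑ i, d k i ≤ (∑ i, p i) - k := by
      intro k
      induction k with
      | zero => simp [hd0]
      | succ k ih =>
        have := hdec k
        push_cast
        linarith
    obtain ⟨N, hN⟩ := exists_nat_gt ((∑ i, p i) - (n + 1) * m)
    have h1 : (n + 1 : ℝ) * m ≤ ∑ i, d N i := by
      calc (n + 1 : ℝ) * m = ∑ _i : Fin (n + 1), m := by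
            simp [Finset.sum_const, mul_comm]
        _ ≤ ∑ i, d N i := Finset.sum_le_sum fun i _ => hlow N i
    have := hk N
    linarith
  obtain ⟨T, hT⟩ := key
  refine ⟨T, fun k hk => ?_⟩
  obtain ⟨j, rfl⟩ := Nat.exists_eq_add_of_le hk
  induction j with
  | zero => rfl
  | succ j ih =>
    have hj : T + (j + 1) = (T + j) + 1 := by ring
    rw [hj, hd, ih (Nat.le_add_right _ _)]
    exact hfix (d T) hT
end

section
/- Let Λ be an n-dimensional lattice of Voronoi's first kind in ℝ^m with obtuse superbasis b_1, …, b_{n+1}, let B be the linear map sending w ∈ ℝ^{n+1} to ∑_{i=1}^{n+1} w_i b_i, and let z ∈ ℝ^{n+1}. If v ∈ ℤ^{n+1} is such that B(⌊z⌋ + v) is a closest lattice point of Λ to y = Bz, then B(⌊z⌋ + decrng(v)) is also a closest lattice point of Λ to y. Here ⌊z⌋ denotes the componentwise floor of z. -/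
open scoped RealInnerProductSpace Classical

lemma subr_gap {n : ℕ} (p : Fin (n + 1) → ℝ) {i j : Fin (n + 1)}
    (hi : i ∈ subr p) (hj : j ∉ subr p) : p j + 2 ≤ p i := by
  rw [subr, Finset.mem_sup] at hi
  obtain ⟨T, hT, hiT⟩ := hi
  have hjT : j ∉ T := fun hjT => hj (by
    rw [subr, Finset.mem_sup]; exact ⟨T, hT, hjT⟩)
  simp only [Finset.mem_filter] at hT
  exact hT.2.2 i hiT j hjT

lemma double_sum_identity {N : ℕ} (Q : Fin N → Fin N → ℝ) (hsymm : ∀ i j, Q i j = Q j i)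
    (hrow : ∀ i, ∑ j, Q i j = 0) (g s : Fin N → ℝ) :
    2 * ∑ i, ∑ j, g i * s j * Q i j
      = - ∑ i, ∑ j, Q i j * ((g i - g j) * (s i - s j)) := by
  have hcol : ∀ j, ∑ i, Q i j = 0 := by
    intro j
    rw [Finset.sum_congr rfl fun i _ => hsymm i j]
    exact hrow j
  have hA : ∑ i, ∑ j, Q i j * (g i * s i) = (0:ℝ) := by
    refine Finset.sum_eq_zero fun i _ => ?_
    rw [← Finset.sum_mul, hrow i, zero_mul]
  have hD : ∑ i, ∑ j, Q i j * (g j * s j) = (0:ℝ) := by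
    rw [Finset.sum_comm]
    refine Finset.sum_eq_zero fun j _ => ?_
    rw [← Finset.sum_mul, hcol j, zero_mul]
  have hC : ∑ i, ∑ j, Q i j * (g j * s i) = ∑ i, ∑ j, g i * s j * Q i j := by
    rw [Finset.sum_comm]
    refine Finset.sum_congr rfl fun j _ => Finset.sum_congr rfl fun i _ => ?_
    rw [hsymm i j]; ring
  have hB : ∑ i, ∑ j, Q i j * (g i * s j) = ∑ i, ∑ j, g i * s j * Q i j := by
    refine Finset.sum_congr rfl fun i _ => Finset.sum_congr rfl fun j _ => ?_
    ring
  have expand : ∑ i, ∑ j, Q i j * ((g i - g j) * (s i - s j))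
      = ∑ i, ∑ j, (Q i j * (g i * s i) - Q i j * (g i * s j)
          - Q i j * (g j * s i) + Q i j * (g j * s j)) := by
    refine Finset.sum_congr rfl fun i _ => Finset.sum_congr rfl fun j _ => ?_
    ring
  rw [expand]
  simp only [Finset.sum_add_distrib, Finset.sum_sub_distrib]
  rw [hA, hD, hC, hB]
  ring

/-- for a lattice of Voronoi's first kind with obtuse superbasis
`b_1, …, b_{n+1}`, if `B(⌊z⌋ + v)` is a closest lattice point to `y = Bz` then so is
`B(⌊z⌋ + decrng(v))`. -/
theorem decrng_preserves_closest_point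
    (n m : ℕ) (b : Fin (n + 1) → EuclideanSpace ℝ (Fin m))
    (hb : LinearIndependent ℝ (fun i : Fin n => b i.castSucc))
    (Λ : Set (EuclideanSpace ℝ (Fin m)))
    (hΛ : Λ = {x | ∃ u : Fin n → ℤ, x = ∑ i, (u i : ℝ) • b i.castSucc})
    (hsum : ∑ i, b i = 0)
    (hobtuse : ∀ i j, i ≠ j → ⟪b i, b j⟫ ≤ 0)
    (z : Fin (n + 1) → ℝ) (v : Fin (n + 1) → ℤ)
    (hclosest : (∑ i, ((⌊z i⌋ : ℝ) + (v i : ℝ)) • b i) ∈ Λ ∧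
      ∀ x' ∈ Λ, ‖(∑ i, z i • b i) - ∑ i, ((⌊z i⌋ : ℝ) + (v i : ℝ)) • b i‖ ≤
        ‖(∑ i, z i • b i) - x'‖) :
    (∑ i, ((⌊z i⌋ : ℝ) + decrng (fun j => (v j : ℝ)) i) • b i) ∈ Λ ∧
      ∀ x' ∈ Λ, ‖(∑ i, z i • b i) - ∑ i, ((⌊z i⌋ : ℝ) + decrng (fun j => (v j : ℝ)) i) • b i‖ ≤
        ‖(∑ i, z i • b i) - x'‖ := by
  classical
  set S : Finset (Fin (n + 1)) := subr (fun j => (v j : ℝ)) with hSdef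
  set s : Fin (n + 1) → ℝ := fun i => if i ∈ S then 1 else 0 with hsdef
  set t : Fin (n + 1) → ℝ := fun i => z i - (⌊z i⌋ : ℝ) - (v i : ℝ) with htdef
  -- membership of arbitrary integer combinations
  have hb_last : b (Fin.last n) = -∑ i : Fin n, b i.castSucc := by
    have h := hsum
    rw [Fin.sum_univ_castSucc] at h
    exact eq_neg_of_add_eq_zero_right h
  have hmem : ∀ c : Fin (n + 1) → ℤ, (∑ i, (c i : ℝ) • b i) ∈ Λ := by
    intro c
    rw [hΛ]
    refine ⟨fun i => c i.castSucc - c (Fin.last n), ?_⟩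
    rw [Fin.sum_univ_castSucc, hb_last, smul_neg, Finset.smul_sum]
    rw [← sub_eq_add_neg, ← Finset.sum_sub_distrib]
    refine Finset.sum_congr rfl fun i _ => ?_
    rw [← sub_smul]
    push_cast
    ring_nf
  -- the coefficients of the new point are integers
  have hcoef : ∀ i, ((⌊z i⌋ : ℝ) + decrng (fun j => (v j : ℝ)) i)
      = ((⌊z i⌋ + v i - (if i ∈ S then 1 else 0) : ℤ) : ℝ) := by
    intro i
    simp only [decrng, ← hSdef]
    split_ifs <;> push_cast <;> ring
  constructor
  · rw [Finset.sum_congr rfl fun i _ => by rw [hcoef i]]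
    exact hmem _
  · intro x' hx'
    have h2 := hclosest.2 x' hx'
    refine le_trans ?_ h2
    -- rewrite both residuals
    set a : EuclideanSpace ℝ (Fin m) := ∑ i, t i • b i with hadef
    set cv : EuclideanSpace ℝ (Fin m) := ∑ i, s i • b i with hcvdef
    have hresid_old : (∑ i, z i • b i) - ∑ i, ((⌊z i⌋ : ℝ) + (v i : ℝ)) • b i = a := by
      rw [hadef, ← Finset.sum_sub_distrib]
      refine Finset.sum_congr rfl fun i _ => ?_
      rw [← sub_smul]
      congr 1
      simp only [htdef]
      ring
    have hresid_new : (∑ i, z i • b i) - ∑ i, ((⌊z i⌋ : ℝ) + decrng (fun j => (v j : ℝ)) i) • b i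
        = a + cv := by
      rw [hadef, hcvdef, ← Finset.sum_add_distrib, ← Finset.sum_sub_distrib]
      refine Finset.sum_congr rfl fun i _ => ?_
      rw [← sub_smul, ← add_smul]
      congr 1
      simp only [htdef, hsdef, decrng, ← hSdef]
      ring
    rw [hresid_old, hresid_new]
    -- the key inequality
    set Q : Fin (n + 1) → Fin (n + 1) → ℝ := fun i j => ⟪b i, b j⟫ with hQdef
    have hQsymm : ∀ i j, Q i j = Q j i := fun i j => real_inner_comm _ _
    have hrow : ∀ i, ∑ j, Q i j = 0 := by
      intro i
      rw [hQdef]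
      rw [← inner_sum, hsum, inner_zero_right]
    set g : Fin (n + 1) → ℝ := fun i => 2 * t i + s i with hgdef
    have hterm : ∀ i j, 0 ≤ Q i j * ((g i - g j) * (s i - s j)) := by
      intro i j
      by_cases hij : i = j
      · subst hij; simp
      by_cases hiS : i ∈ S <;> by_cases hjS : j ∈ S
      · simp [hsdef, hiS, hjS]
      · have hQ : Q i j ≤ 0 := hobtuse i j hij
        have hv : (v j : ℝ) + 2 ≤ (v i : ℝ) := subr_gap _ hiS hjS
        have h1 : (⌊z i⌋ : ℝ) ≤ z i := Int.floor_le _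
        have h2' : z i < (⌊z i⌋ : ℝ) + 1 := Int.lt_floor_add_one _
        have h3 : (⌊z j⌋ : ℝ) ≤ z j := Int.floor_le _
        have h4 : z j < (⌊z j⌋ : ℝ) + 1 := Int.lt_floor_add_one _
        have hgs : (g i - g j) * (s i - s j) ≤ 0 := by
          simp only [hgdef, hsdef, htdef, hiS, hjS, if_true, if_false]
          nlinarith
        have hm := mul_nonneg (neg_nonneg.mpr hQ) (neg_nonneg.mpr hgs)
        rw [neg_mul_neg] at hm
        exact hm
      · have hQ : Q i j ≤ 0 := hobtuse i j hij
        have hv : (v i : ℝ) + 2 ≤ (v j : ℝ) := subr_gap _ hjS hiS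
        have h1 : (⌊z i⌋ : ℝ) ≤ z i := Int.floor_le _
        have h2' : z i < (⌊z i⌋ : ℝ) + 1 := Int.lt_floor_add_one _
        have h3 : (⌊z j⌋ : ℝ) ≤ z j := Int.floor_le _
        have h4 : z j < (⌊z j⌋ : ℝ) + 1 := Int.lt_floor_add_one _
        have hgs : (g i - g j) * (s i - s j) ≤ 0 := by
          simp only [hgdef, hsdef, htdef, hiS, hjS, if_true, if_false]
          nlinarith
        have hm := mul_nonneg (neg_nonneg.mpr hQ) (neg_nonneg.mpr hgs)
        rw [neg_mul_neg] at hm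
        exact hm
      · simp [hsdef, hiS, hjS]
    have hsum_nonneg : 0 ≤ ∑ i, ∑ j, Q i j * ((g i - g j) * (s i - s j)) :=
      Finset.sum_nonneg fun i _ => Finset.sum_nonneg fun j _ => hterm i j
    have hBle : ∑ i, ∑ j, g i * s j * Q i j ≤ 0 := by
      have := double_sum_identity Q hQsymm hrow g s
      linarith
    have hiac : ⟪a, cv⟫ = ∑ i, ∑ j, t i * s j * Q i j := by
      rw [hadef, hcvdef]
      rw [sum_inner]
      refine Finset.sum_congr rfl fun i _ => ?_
      rw [inner_sum]
      refine Finset.sum_congr rfl fun j _ => ?_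
      rw [real_inner_smul_left, real_inner_smul_right, hQdef]
      ring
    have hicc : ‖cv‖ ^ 2 = ∑ i, ∑ j, s i * s j * Q i j := by
      rw [← real_inner_self_eq_norm_sq, hcvdef]
      rw [sum_inner]
      refine Finset.sum_congr rfl fun i _ => ?_
      rw [inner_sum]
      refine Finset.sum_congr rfl fun j _ => ?_
      rw [real_inner_smul_left, real_inner_smul_right, hQdef]
      ring
    have hcomb : ∑ i, ∑ j, g i * s j * Q i j
        = 2 * ⟪a, cv⟫ + ‖cv‖ ^ 2 := by
      rw [hiac, hicc, Finset.mul_sum, ← Finset.sum_add_distrib]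
      refine Finset.sum_congr rfl fun i _ => ?_
      rw [Finset.mul_sum, ← Finset.sum_add_distrib]
      refine Finset.sum_congr rfl fun j _ => ?_
      simp only [hgdef]
      ring
    have hkey : 2 * ⟪a, cv⟫ + ‖cv‖ ^ 2 ≤ 0 := by rw [← hcomb]; exact hBle
    have hsq : ‖a + cv‖ ^ 2 ≤ ‖a‖ ^ 2 := by
      rw [norm_add_sq_real]
      linarith
    exact (pow_le_pow_iff_left₀ (norm_nonneg _) (norm_nonneg _) two_ne_zero).mp hsq
end

section
/- Let Λ be an n-dimensional lattice of Voronoi's first kind in ℝ^m with obtuse superbasis b_1, …, b_{n+1}, let B be the linear map sending w ∈ ℝ^{n+1} to ∑_{i=1}^{n+1} w_i b_i, and let z ∈ ℝ^{n+1}. Then there exists v ∈ ℤ^{n+1} with rng(v) ≤ n such that B(⌊z⌋ + v) is a closest lattice point of Λ to y = Bz, where ⌊z⌋ denotes the componentwise floor of z. -/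
open scoped RealInnerProductSpace

lemma inner_sum_smul_sum {k m : ℕ} (b : Fin k → EuclideanSpace ℝ (Fin m)) (a u : Fin k → ℝ) :
    ⟪∑ i, a i • b i, ∑ j, u j • b j⟫ = ∑ i, ∑ j, a i * u j * ⟪b i, b j⟫ := by
  rw [sum_inner]
  refine Finset.sum_congr rfl fun i _ => ?_
  rw [inner_sum]
  refine Finset.sum_congr rfl fun j _ => ?_
  rw [real_inner_smul_left, real_inner_smul_right]; ring

lemma step_norm {n m : ℕ} (b : Fin (n + 1) → EuclideanSpace ℝ (Fin m))
    (hsum : ∑ i, b i = 0) (hobtuse : ∀ i j, i ≠ j → ⟪b i, b j⟫ ≤ 0)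
    (d : Fin (n + 1) → ℝ) (T : Finset (Fin (n + 1)))
    (hT : ∀ i ∉ T, ∀ j ∈ T, 1 / 2 ≤ d i - d j) :
    ‖∑ i, (d i + (if i ∈ T then (1 : ℝ) else 0)) • b i‖ ≤ ‖∑ i, d i • b i‖ := by
  classical
  set u : Fin (n + 1) → ℝ := fun i => if i ∈ T then (1 : ℝ) else 0 with hu
  set a : Fin (n + 1) → ℝ := fun i => 2 * d i + u i with ha
  set q : Fin (n + 1) → Fin (n + 1) → ℝ := fun i j => ⟪b i, b j⟫ with hq
  have hqsymm : ∀ i j, q i j = q j i := fun i j => real_inner_comm _ _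
  have hqcol : ∀ j, ∑ i, q i j = 0 := by
    intro j
    simp only [hq]
    rw [← sum_inner, hsum, inner_zero_left]
  -- key sum S
  have hS : (∑ i, ∑ j, a i * u j * q i j) ≤ 0 := by
    have h1 : (∑ i, ∑ j, a i * u j * q i j)
        = ∑ i, ∑ j, (a i - a j) * u j * q i j := by
      have h2 : (∑ i, ∑ j, a j * u j * q i j) = 0 := by
        rw [Finset.sum_comm]
        refine Finset.sum_eq_zero fun j _ => ?_
        have : (∑ i, a j * u j * q i j) = a j * u j * ∑ i, q i j := by
          rw [Finset.mul_sum]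
        rw [this, hqcol, mul_zero]
      have := Finset.sum_congr rfl (fun i (_ : i ∈ Finset.univ) =>
        (Finset.sum_sub_distrib (s := Finset.univ)
          (f := fun j => a i * u j * q i j) (g := fun j => a j * u j * q i j)).symm)
      calc (∑ i, ∑ j, a i * u j * q i j)
          = (∑ i, ∑ j, a i * u j * q i j) - ∑ i, ∑ j, a j * u j * q i j := by rw [h2, sub_zero]
        _ = ∑ i, ((∑ j, a i * u j * q i j) - ∑ j, a j * u j * q i j) := by
            rw [Finset.sum_sub_distrib]
        _ = ∑ i, ∑ j, (a i - a j) * u j * q i j := by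
            refine Finset.sum_congr rfl fun i _ => ?_
            rw [← Finset.sum_sub_distrib]
            refine Finset.sum_congr rfl fun j _ => ?_
            ring
    have h3 : (∑ i, ∑ j, (a i - a j) * u j * q i j)
        = ∑ i, ∑ j, (a j - a i) * u i * q i j := by
      rw [Finset.sum_comm]
      refine Finset.sum_congr rfl fun i _ => Finset.sum_congr rfl fun j _ => ?_
      rw [hqsymm i j]
    have hterm : ∀ i j, (a i - a j) * u j * q i j + (a j - a i) * u i * q i j ≤ 0 := by
      intro i j
      by_cases hi : i ∈ T <;> by_cases hj : j ∈ T
      · simp only [hu, hi, hj, if_pos]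
        ring_nf
        exact le_of_eq (by ring)
      · -- i ∈ T, j ∉ T : d i - d j ≤ -1/2 from hT j i? hT gives for i∉T, j∈T.
        have hd := hT j hj i hi
        have hij : i ≠ j := fun h => hj (h ▸ hi)
        have hq0 : q i j ≤ 0 := hobtuse i j hij
        have hA : a j - a i ≥ 0 := by
          simp only [ha, hu, if_pos hi, if_neg hj]
          linarith
        simp only [hu, if_pos hi, if_neg hj, mul_zero, mul_one, zero_mul, add_zero, mul_zero]
        nlinarith
      · have hd := hT i hi j hj
        have hij : i ≠ j := fun h => hi (h ▸ hj)
        have hq0 : q i j ≤ 0 := hobtuse i j hij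
        have hA : a i - a j ≥ 0 := by
          simp only [ha, hu, if_pos hj, if_neg hi]
          linarith
        simp only [hu, if_pos hj, if_neg hi, mul_zero, mul_one, zero_mul, add_zero, mul_zero]
        nlinarith
      · simp [hu, hi, hj]
    have h2S : (∑ i, ∑ j, (a i - a j) * u j * q i j) +
        (∑ i, ∑ j, (a j - a i) * u i * q i j) ≤ 0 := by
      rw [← Finset.sum_add_distrib]
      refine Finset.sum_nonpos fun i _ => ?_
      rw [← Finset.sum_add_distrib]
      exact Finset.sum_nonpos fun j _ => hterm i j
    rw [h1]
    nlinarith [h3]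
  -- translate to norms
  set x : EuclideanSpace ℝ (Fin m) := ∑ i, d i • b i with hx
  set w : EuclideanSpace ℝ (Fin m) := ∑ i, u i • b i with hw
  have hsum' : (∑ i, (d i + u i) • b i) = x + w := by
    rw [hx, hw, ← Finset.sum_add_distrib]
    exact Finset.sum_congr rfl fun i _ => add_smul _ _ _
  have hFa : (∑ i, a i • b i) = (2 : ℝ) • x + w := by
    rw [hx, hw, Finset.smul_sum, ← Finset.sum_add_distrib]
    refine Finset.sum_congr rfl fun i _ => ?_
    rw [smul_smul, ← add_smul]
  have hinner : ⟪(2 : ℝ) • x + w, w⟫ ≤ 0 := by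
    rw [← hFa, hw]
    rw [inner_sum_smul_sum]
    exact hS
  have hsq : ‖x + w‖ ^ 2 ≤ ‖x‖ ^ 2 := by
    have expand : ‖x + w‖ ^ 2 = ‖x‖ ^ 2 + (2 * ⟪x, w⟫ + ⟪w, w⟫) := by
      have := real_inner_add_add_self x w
      rw [real_inner_self_eq_norm_sq, real_inner_self_eq_norm_sq] at this
      linarith [this]
    have h2 : 2 * ⟪x, w⟫ + ⟪w, w⟫ ≤ 0 := by
      have : ⟪(2 : ℝ) • x + w, w⟫ = 2 * ⟪x, w⟫ + ⟪w, w⟫ := by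
        rw [inner_add_left, real_inner_smul_left]
      linarith [hinner, this.symm.le, this.le]
    linarith
  rw [hsum']
  have := Real.sqrt_le_sqrt hsq
  rwa [Real.sqrt_sq (norm_nonneg _), Real.sqrt_sq (norm_nonneg _)] at this

lemma exists_gap {n : ℕ} (v : Fin (n + 1) → ℤ)
    (h : (n : ℤ) + 1 ≤ Finset.univ.sup' Finset.univ_nonempty v
      - Finset.univ.inf' Finset.univ_nonempty v) :
    ∃ c : ℤ, (∀ i, v i ≠ c) ∧ (∃ i, v i < c) ∧ (∃ i, c < v i) := by
  classical
  set L := Finset.univ.inf' Finset.univ_nonempty v with hL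
  set M := Finset.univ.sup' Finset.univ_nonempty v with hM
  obtain ⟨i0, -, hi0⟩ := Finset.exists_mem_eq_inf' (Finset.univ_nonempty (α := Fin (n+1))) v
  obtain ⟨i1, -, hi1⟩ := Finset.exists_mem_eq_sup' (Finset.univ_nonempty (α := Fin (n+1))) v
  have hnotsub : ¬ (Finset.Ioo L M ⊆ Finset.univ.image v) := by
    intro hsub
    have hsub2 : insert L (insert M (Finset.Ioo L M)) ⊆ Finset.univ.image v := by
      intro c hc
      simp only [Finset.mem_insert] at hc
      rcases hc with rfl | rfl | hc
      · exact Finset.mem_image.2 ⟨i0, Finset.mem_univ _, hi0.symm⟩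
      · exact Finset.mem_image.2 ⟨i1, Finset.mem_univ _, hi1.symm⟩
      · exact hsub hc
    have hcard := Finset.card_le_card hsub2
    have hLni : L ∉ insert M (Finset.Ioo L M) := by
      simp only [Finset.mem_insert, Finset.mem_Ioo]
      omega
    have hMni : M ∉ Finset.Ioo L M := by simp [Finset.mem_Ioo]
    rw [Finset.card_insert_of_notMem hLni, Finset.card_insert_of_notMem hMni,
      Int.card_Ioo] at hcard
    have himg : (Finset.univ.image v).card ≤ n + 1 := by
      calc (Finset.univ.image v).card ≤ (Finset.univ : Finset (Fin (n + 1))).card :=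
            Finset.card_image_le
        _ = n + 1 := by simp
    omega
  obtain ⟨c, hcIoo, hcnot⟩ := Finset.not_subset.1 hnotsub
  rw [Finset.mem_Ioo] at hcIoo
  refine ⟨c, fun i hi => hcnot (Finset.mem_image.2 ⟨i, Finset.mem_univ _, hi⟩), ⟨i0, ?_⟩, ⟨i1, ?_⟩⟩
  · omega
  · omega

/-- for a lattice of Voronoi's first kind with obtuse superbasis
`b_1, …, b_{n+1}` and any `z ∈ ℝ^{n+1}`, there exists `v ∈ ℤ^{n+1}` with
`rng(v) = max(v) − min(v) ≤ n` such that `B(⌊z⌋ + v)` is a closest lattice point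
to `y = Bz`. -/
theorem exists_closest_point_small_rng
    (n m : ℕ) (b : Fin (n + 1) → EuclideanSpace ℝ (Fin m))
    (hb : LinearIndependent ℝ (fun i : Fin n => b i.castSucc))
    (Λ : Set (EuclideanSpace ℝ (Fin m)))
    (hΛ : Λ = {x | ∃ u : Fin n → ℤ, x = ∑ i, (u i : ℝ) • b i.castSucc})
    (hsum : ∑ i, b i = 0)
    (hobtuse : ∀ i j, i ≠ j → ⟪b i, b j⟫ ≤ 0)
    (z : Fin (n + 1) → ℝ) :
    ∃ v : Fin (n + 1) → ℤ,
      Finset.univ.sup' Finset.univ_nonempty v - Finset.univ.inf' Finset.univ_nonempty v ≤ n ∧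
      (∑ i, ((⌊z i⌋ : ℝ) + (v i : ℝ)) • b i) ∈ Λ ∧
      ∀ x' ∈ Λ, ‖(∑ i, z i • b i) - ∑ i, ((⌊z i⌋ : ℝ) + (v i : ℝ)) • b i‖ ≤
        ‖(∑ i, z i • b i) - x'‖ := by
  classical
  set y : EuclideanSpace ℝ (Fin m) := ∑ i, z i • b i with hy
  have hlast : b (Fin.last n) = -∑ i : Fin n, b i.castSucc := by
    have h := hsum
    rw [Fin.sum_univ_castSucc] at h
    rw [add_comm] at h
    exact eq_neg_of_add_eq_zero_left h
  -- every integer combination of all n+1 vectors is in Λ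
  have hmem : ∀ w : Fin (n + 1) → ℤ, (∑ i, (w i : ℝ) • b i) ∈ Λ := by
    intro w
    rw [hΛ]
    refine ⟨fun i => w i.castSucc - w (Fin.last n), ?_⟩
    rw [Fin.sum_univ_castSucc, hlast, smul_neg, Finset.smul_sum, ← sub_eq_add_neg,
      ← Finset.sum_sub_distrib]
    refine Finset.sum_congr rfl fun i _ => ?_
    push_cast
    rw [sub_smul]
  -- Λ is closed
  have hΛclosed : IsClosed Λ := by
    set f : (Fin n → ℝ) →ₗ[ℝ] EuclideanSpace ℝ (Fin m) :=
      { toFun := fun u => ∑ i, u i • b i.castSucc,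
        map_add' := by
          intro u v
          simp only [Pi.add_apply, add_smul, Finset.sum_add_distrib]
        map_smul' := by
          intro c u
          simp only [Pi.smul_apply, smul_eq_mul, mul_smul, RingHom.id_apply, Finset.smul_sum] } with hf
    have hker : LinearMap.ker f = ⊥ := by
      rw [LinearMap.ker_eq_bot']
      intro u hu
      have := Fintype.linearIndependent_iff.1 hb u hu
      funext i
      exact this i
    have hemb := LinearMap.isClosedEmbedding_of_injective hker
    set S : Set (Fin n → ℝ) := {u | ∀ i, ∃ k : ℤ, u i = (k : ℝ)} with hSdef
    have hSclosed : IsClosed S := by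
      have hEq : S = ⋂ i, (fun u : Fin n → ℝ => u i) ⁻¹' (Set.range ((↑) : ℤ → ℝ)) := by
        ext u
        simp [hSdef, Set.mem_iInter, Set.mem_range, eq_comm]
      rw [hEq]
      exact isClosed_iInter fun i =>
        (Int.isClosedEmbedding_coe_real.isClosed_range).preimage (continuous_apply i)
    have hΛeq : Λ = f '' S := by
      rw [hΛ]
      ext x
      constructor
      · rintro ⟨u, rfl⟩
        exact ⟨fun i => (u i : ℝ), fun i => ⟨u i, rfl⟩, rfl⟩
      · rintro ⟨u, hu, rfl⟩
        choose k hk using hu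
        refine ⟨k, ?_⟩
        show (∑ i, u i • b i.castSucc) = _
        exact Finset.sum_congr rfl fun i _ => by rw [hk i]
    rw [hΛeq]
    exact hemb.isClosedMap _ hSclosed
  have h0 : (0 : EuclideanSpace ℝ (Fin m)) ∈ Λ := by
    have := hmem 0
    simpa using this
  -- existence of a closest point
  obtain ⟨x₀, hx₀Λ, hx₀min⟩ : ∃ x₀ ∈ Λ, ∀ x' ∈ Λ, ‖y - x₀‖ ≤ ‖y - x'‖ := by
    set K := Λ ∩ Metric.closedBall y ‖y‖ with hK
    have hKc : IsCompact K := (isCompact_closedBall y ‖y‖).inter_left hΛclosed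
    have h0K : (0 : EuclideanSpace ℝ (Fin m)) ∈ K :=
      ⟨h0, by simp [Metric.mem_closedBall, dist_eq_norm]⟩
    obtain ⟨x₀, hx₀K, hmin⟩ := hKc.exists_isMinOn ⟨0, h0K⟩
      ((continuous_const.sub continuous_id).norm.continuousOn)
    refine ⟨x₀, hx₀K.1, fun x' hx' => ?_⟩
    by_cases hball : x' ∈ Metric.closedBall y ‖y‖
    · exact isMinOn_iff.1 hmin x' ⟨hx', hball⟩
    · have h1 : ‖y - x₀‖ ≤ ‖y - 0‖ := isMinOn_iff.1 hmin 0 h0K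
      have h2 : ‖y‖ < ‖y - x'‖ := by
        rw [Metric.mem_closedBall, not_le, dist_comm] at hball
        rw [← dist_eq_norm]
        exact hball
      rw [sub_zero] at h1
      linarith
  -- write x₀ as an integer combination of all n+1 vectors
  obtain ⟨u₀, hu₀⟩ : ∃ u : Fin n → ℤ, x₀ = ∑ i, (u i : ℝ) • b i.castSucc := by
    rw [hΛ] at hx₀Λ; exact hx₀Λ
  set w₀ : Fin (n + 1) → ℤ := Fin.snoc u₀ 0 with hw₀
  have hx₀w : x₀ = ∑ i, (w₀ i : ℝ) • b i := by
    rw [Fin.sum_univ_castSucc]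
    simp only [hw₀, Fin.snoc_castSucc, Fin.snoc_last, Int.cast_zero, zero_smul, add_zero]
    exact hu₀
  set v₀ : Fin (n + 1) → ℤ := fun i => w₀ i - ⌊z i⌋ with hv₀
  -- the descent step
  have descent : ∀ k : ℕ, ∀ v : Fin (n + 1) → ℤ,
      Finset.univ.sup' Finset.univ_nonempty v - Finset.univ.inf' Finset.univ_nonempty v ≤ (k : ℤ) →
      ∃ v' : Fin (n + 1) → ℤ,
        Finset.univ.sup' Finset.univ_nonempty v' - Finset.univ.inf' Finset.univ_nonempty v' ≤ (n : ℤ) ∧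
        ‖y - ∑ i, ((⌊z i⌋ : ℝ) + (v' i : ℝ)) • b i‖ ≤
          ‖y - ∑ i, ((⌊z i⌋ : ℝ) + (v i : ℝ)) • b i‖ := by
    intro k
    induction k with
    | zero =>
      intro v hv
      exact ⟨v, le_trans hv (by exact_mod_cast Nat.zero_le n), le_refl _⟩
    | succ k ih =>
      intro v hv
      by_cases hle : Finset.univ.sup' Finset.univ_nonempty v
          - Finset.univ.inf' Finset.univ_nonempty v ≤ (n : ℤ)
      · exact ⟨v, hle, le_refl _⟩
      · have hbig : (n : ℤ) + 1 ≤ Finset.univ.sup' Finset.univ_nonempty v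
            - Finset.univ.inf' Finset.univ_nonempty v := by omega
        obtain ⟨c, hcne, ⟨i₁, hi₁⟩, ⟨i₂, hi₂⟩⟩ := exists_gap v hbig
        set T : Finset (Fin (n + 1)) := Finset.univ.filter (fun i => c < v i) with hT
        set v' : Fin (n + 1) → ℤ := fun i => v i - (if c < v i then 1 else 0) with hv'
        have hmemT : ∀ i, i ∈ T ↔ c < v i := by
          intro i; simp [hT]
        -- norm inequality via step_norm
        have hnorm : ‖y - ∑ i, ((⌊z i⌋ : ℝ) + (v' i : ℝ)) • b i‖ ≤
            ‖y - ∑ i, ((⌊z i⌋ : ℝ) + (v i : ℝ)) • b i‖ := by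
          have hrw : ∀ ν : Fin (n + 1) → ℤ, y - ∑ i, ((⌊z i⌋ : ℝ) + (ν i : ℝ)) • b i
              = ∑ i, (z i - ((⌊z i⌋ : ℝ) + (ν i : ℝ))) • b i := by
            intro ν
            rw [hy, ← Finset.sum_sub_distrib]
            exact Finset.sum_congr rfl fun i _ => (sub_smul _ _ _).symm
          rw [hrw v, hrw v']
          set d : Fin (n + 1) → ℝ := fun i => z i - ((⌊z i⌋ : ℝ) + (v i : ℝ)) with hd
          have hstep := step_norm b hsum hobtuse d T ?_
          · have heq : (∑ i, (d i + (if i ∈ T then (1 : ℝ) else 0)) • b i)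
                = ∑ i, (z i - ((⌊z i⌋ : ℝ) + (v' i : ℝ))) • b i := by
              refine Finset.sum_congr rfl fun i _ => ?_
              congr 1
              simp only [hd, hv', hmemT i]
              by_cases hc : c < v i <;> simp [hc] <;> push_cast <;> ring
            rwa [heq] at hstep
          · intro i hiT j hjT
            rw [hmemT] at hiT hjT
            have hvi : v i ≤ c - 1 := by
              have := hcne i
              omega
            have hvj : c + 1 ≤ v j := hjT
            have hfi : (0 : ℝ) ≤ Int.fract (z i) := Int.fract_nonneg _
            have hfj : Int.fract (z j) < 1 := Int.fract_lt_one _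
            have hdi : d i = Int.fract (z i) - (v i : ℝ) := by
              simp only [hd, Int.fract]; ring
            have hdj : d j = Int.fract (z j) - (v j : ℝ) := by
              simp only [hd, Int.fract]; ring
            have hcast : (v j : ℝ) - (v i : ℝ) ≥ 2 := by
              have : (2 : ℤ) ≤ v j - v i := by omega
              exact_mod_cast this
            rw [hdi, hdj]
            linarith
        -- range decrease
        have hlow : ∀ i, Finset.univ.inf' Finset.univ_nonempty v ≤ v' i := by
          intro i
          have h1 : Finset.univ.inf' Finset.univ_nonempty v ≤ v i :=
            Finset.inf'_le v (Finset.mem_univ i)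
          have h2 : Finset.univ.inf' Finset.univ_nonempty v ≤ v i₁ :=
            Finset.inf'_le v (Finset.mem_univ i₁)
          simp only [hv']
          split_ifs with hc <;> omega
        have hhigh : ∀ i, v' i ≤ Finset.univ.sup' Finset.univ_nonempty v - 1 := by
          intro i
          have h1 : v i ≤ Finset.univ.sup' Finset.univ_nonempty v :=
            Finset.le_sup' v (Finset.mem_univ i)
          have h2 : v i₂ ≤ Finset.univ.sup' Finset.univ_nonempty v :=
            Finset.le_sup' v (Finset.mem_univ i₂)
          have h3 := hcne i
          simp only [hv']
          split_ifs with hc <;> omega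
        have hrng : Finset.univ.sup' Finset.univ_nonempty v'
            - Finset.univ.inf' Finset.univ_nonempty v' ≤ (k : ℤ) := by
          have hs : Finset.univ.sup' Finset.univ_nonempty v'
              ≤ Finset.univ.sup' Finset.univ_nonempty v - 1 :=
            Finset.sup'_le _ _ fun i _ => hhigh i
          have hi : Finset.univ.inf' Finset.univ_nonempty v
              ≤ Finset.univ.inf' Finset.univ_nonempty v' :=
            Finset.le_inf' _ _ fun i _ => hlow i
          push_cast at hv ⊢
          omega
        obtain ⟨v'', hv''rng, hv''norm⟩ := ih v' hrng
        exact ⟨v'', hv''rng, le_trans hv''norm hnorm⟩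
  -- apply descent to v₀
  have hstart : Finset.univ.sup' Finset.univ_nonempty v₀
      - Finset.univ.inf' Finset.univ_nonempty v₀
      ≤ ((Finset.univ.sup' Finset.univ_nonempty v₀
        - Finset.univ.inf' Finset.univ_nonempty v₀).toNat : ℤ) := Int.self_le_toNat _
  obtain ⟨v, hvrng, hvnorm⟩ := descent _ v₀ hstart
  have hx₀v₀ : (∑ i, ((⌊z i⌋ : ℝ) + (v₀ i : ℝ)) • b i) = x₀ := by
    rw [hx₀w]
    refine Finset.sum_congr rfl fun i _ => ?_
    congr 1
    simp only [hv₀]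
    push_cast
    ring
  refine ⟨v, hvrng, ?_, ?_⟩
  · have := hmem (fun i => ⌊z i⌋ + v i)
    have heq : (∑ i, ((⌊z i⌋ + v i : ℤ) : ℝ) • b i)
        = ∑ i, ((⌊z i⌋ : ℝ) + (v i : ℝ)) • b i := by
      refine Finset.sum_congr rfl fun i _ => ?_
      push_cast
      ring_nf
    rwa [heq] at this
  · intro x' hx'
    calc ‖y - ∑ i, ((⌊z i⌋ : ℝ) + (v i : ℝ)) • b i‖
        ≤ ‖y - ∑ i, ((⌊z i⌋ : ℝ) + (v₀ i : ℝ)) • b i‖ := hvnorm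
      _ = ‖y - x₀‖ := by rw [hx₀v₀]
      _ ≤ ‖y - x'‖ := hx₀min x' hx'
end

section
/- Let Λ be an n-dimensional lattice of Voronoi's first kind in ℝ^m with obtuse superbasis b_1, …, b_{n+1}, let B be the linear map sending w ∈ ℝ^{n+1} to ∑_{i=1}^{n+1} w_i b_i, let z ∈ ℝ^{n+1} and y = Bz. Let u ∈ ℤ^{n+1} and suppose the lattice point Bu is ℓ-close to y with ℓ > 0. Let g ∈ {0,1}^{n+1} satisfy ‖B(z − u − g)‖² = min over t ∈ {0,1}^{n+1} of ‖B(z − u − t)‖². Then the lattice point B(u + g) is (ℓ−1)-close to y. -/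
open scoped RealInnerProductSpace


lemma norm_sum_sq_expand {m N : ℕ} (b : Fin N → EuclideanSpace ℝ (Fin m)) (c : Fin N → ℝ) :
    ‖∑ i, c i • b i‖^2 = ∑ i, ∑ j, (c i * c j) * ⟪b i, b j⟫ := by
  rw [← real_inner_self_eq_norm_sq, sum_inner]
  refine Finset.sum_congr rfl fun i _ => ?_
  rw [inner_sum]
  refine Finset.sum_congr rfl fun j _ => ?_
  rw [real_inner_smul_left, real_inner_smul_right]; ring

lemma submod {m N : ℕ} (b : Fin N → EuclideanSpace ℝ (Fin m))
    (hobtuse : ∀ i j, i ≠ j → ⟪b i, b j⟫ ≤ 0) (C D : Fin N → ℝ) :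
    ‖∑ i, max (C i) (D i) • b i‖^2 + ‖∑ i, min (C i) (D i) • b i‖^2 ≤
      ‖∑ i, C i • b i‖^2 + ‖∑ i, D i • b i‖^2 := by
  rw [norm_sum_sq_expand, norm_sum_sq_expand, norm_sum_sq_expand, norm_sum_sq_expand,
    ← Finset.sum_add_distrib, ← Finset.sum_add_distrib]
  refine Finset.sum_le_sum fun i _ => ?_
  rw [← Finset.sum_add_distrib, ← Finset.sum_add_distrib]
  refine Finset.sum_le_sum fun j _ => ?_
  set q : ℝ := ⟪b i, b j⟫ with hqdef
  rcases eq_or_ne i j with rfl | hij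
  · rcases le_total (C i) (D i) with h | h
    · rw [max_eq_right h, min_eq_left h]; try linarith
    · rw [max_eq_left h, min_eq_right h]; try linarith
  · have hq : q ≤ 0 := hobtuse i j hij
    rcases le_total (C i) (D i) with h1 | h1 <;> rcases le_total (C j) (D j) with h2 | h2
    · rw [max_eq_right h1, min_eq_left h1, max_eq_right h2, min_eq_left h2]; try linarith
    · rw [max_eq_right h1, min_eq_left h1, max_eq_left h2, min_eq_right h2]
      nlinarith [mul_nonpos_of_nonpos_of_nonneg hq
        (mul_nonneg (sub_nonneg.2 h1) (sub_nonneg.2 h2))]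
    · rw [max_eq_left h1, min_eq_right h1, max_eq_right h2, min_eq_left h2]
      nlinarith [mul_nonpos_of_nonpos_of_nonneg hq
        (mul_nonneg (sub_nonneg.2 h1) (sub_nonneg.2 h2))]
    · rw [max_eq_left h1, min_eq_right h1, max_eq_left h2, min_eq_right h2]; try linarith


lemma sum_smul_shift {m n : ℕ} (b : Fin (n+1) → EuclideanSpace ℝ (Fin m))
    (hsum : ∑ i, b i = 0) (c : Fin (n+1) → ℝ) (r : ℝ) :
    ∑ i, (c i + r) • b i = ∑ i, c i • b i := by
  simp [add_smul, Finset.sum_add_distrib, ← Finset.smul_sum, hsum]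

/-- quadratic form value -/
noncomputable def Fq {m n : ℕ} (b : Fin (n+1) → EuclideanSpace ℝ (Fin m)) (z : Fin (n+1) → ℝ)
    (u x : Fin (n+1) → ℤ) : ℝ :=
  ‖∑ i, (z i - (u i : ℝ) - (x i : ℝ)) • b i‖^2

lemma Fq_eq {m n : ℕ} (b : Fin (n+1) → EuclideanSpace ℝ (Fin m)) (z : Fin (n+1) → ℝ)
    (u x : Fin (n+1) → ℤ) :
    Fq b z u x = ‖(∑ i, z i • b i) - ∑ i, ((u i : ℝ) + (x i : ℝ)) • b i‖^2 := by
  unfold Fq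
  rw [← Finset.sum_sub_distrib]
  congr 1
  refine congrArg _ (Finset.sum_congr rfl fun i _ => ?_)
  module

lemma Fq_shift {m n : ℕ} (b : Fin (n+1) → EuclideanSpace ℝ (Fin m))
    (hsum : ∑ i, b i = 0) (z : Fin (n+1) → ℝ) (u x : Fin (n+1) → ℤ) (r : ℤ) :
    Fq b z u (fun i => x i + r) = Fq b z u x := by
  unfold Fq
  rw [← sum_smul_shift b hsum (fun i => z i - (u i : ℝ) - (x i : ℝ)) (-r : ℝ)]
  congr 1
  refine congrArg _ (Finset.sum_congr rfl fun i _ => ?_)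
  push_cast; ring_nf

lemma Fq_submod {m n : ℕ} (b : Fin (n+1) → EuclideanSpace ℝ (Fin m))
    (hobtuse : ∀ i j, i ≠ j → ⟪b i, b j⟫ ≤ 0) (z : Fin (n+1) → ℝ)
    (u x y : Fin (n+1) → ℤ) :
    Fq b z u (fun i => min (x i) (y i)) + Fq b z u (fun i => max (x i) (y i)) ≤
      Fq b z u x + Fq b z u y := by
  have h := submod b hobtuse (fun i => z i - (u i : ℝ) - (x i : ℝ))
    (fun i => z i - (u i : ℝ) - (y i : ℝ))
  unfold Fq
  have s1 : ∑ i, (z i - (u i:ℝ) - (((fun i => min (x i) (y i)) i : ℤ):ℝ)) • b i =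
      ∑ i, max ((fun i => z i - (u i:ℝ) - (x i:ℝ)) i) ((fun i => z i - (u i:ℝ) - (y i:ℝ)) i) • b i := by
    refine Finset.sum_congr rfl fun i _ => ?_
    congr 1
    beta_reduce
    rcases le_total (x i) (y i) with hxy | hxy
    · have h' : (x i : ℝ) ≤ (y i : ℝ) := by exact_mod_cast hxy
      rw [min_eq_left hxy, max_eq_left (by linarith)]
    · have h' : (y i : ℝ) ≤ (x i : ℝ) := by exact_mod_cast hxy
      rw [min_eq_right hxy, max_eq_right (by linarith)]
  have s2 : ∑ i, (z i - (u i:ℝ) - (((fun i => max (x i) (y i)) i : ℤ):ℝ)) • b i =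
      ∑ i, min ((fun i => z i - (u i:ℝ) - (x i:ℝ)) i) ((fun i => z i - (u i:ℝ) - (y i:ℝ)) i) • b i := by
    refine Finset.sum_congr rfl fun i _ => ?_
    congr 1
    beta_reduce
    rcases le_total (x i) (y i) with hxy | hxy
    · have h' : (x i : ℝ) ≤ (y i : ℝ) := by exact_mod_cast hxy
      rw [max_eq_right hxy, min_eq_right (by linarith)]
    · have h' : (y i : ℝ) ≤ (x i : ℝ) := by exact_mod_cast hxy
      rw [max_eq_left hxy, min_eq_left (by linarith)]
  rw [s1, s2]
  linarith [h]

lemma mem_lattice {m n : ℕ} (b : Fin (n+1) → EuclideanSpace ℝ (Fin m))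
    (hsum : ∑ i, b i = 0) (Λ : Set (EuclideanSpace ℝ (Fin m)))
    (hΛ : Λ = {x | ∃ u : Fin n → ℤ, x = ∑ i, (u i : ℝ) • b i.castSucc})
    (c : Fin (n+1) → ℤ) : (∑ i, (c i : ℝ) • b i) ∈ Λ := by
  rw [hΛ]
  refine ⟨fun i => c i.castSucc - c (Fin.last n), ?_⟩
  rw [Fin.sum_univ_castSucc] at hsum ⊢
  have hlast : b (Fin.last n) = -∑ i : Fin n, b i.castSucc :=
    eq_neg_of_add_eq_zero_right hsum
  rw [hlast]
  push_cast
  simp only [sub_smul, Finset.sum_sub_distrib, smul_neg, ← Finset.smul_sum]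
  abel

/-- `rng v = max(v) − min(v)` for an integer vector `v`. -/
def rng {n : ℕ} (v : Fin (n + 1) → ℤ) : ℤ :=
  Finset.univ.sup' Finset.univ_nonempty v - Finset.univ.inf' Finset.univ_nonempty v

/-- for a lattice of Voronoi's first kind with obtuse superbasis, if `Bu`
is `ℓ`-close to `y = Bz` with `ℓ > 0` and `g ∈ {0,1}^{n+1}` minimizes
`‖B(z − u − t)‖²` over `t ∈ {0,1}^{n+1}`, then `B(u + g)` is `(ℓ−1)`-close to `y`.
(A lattice point `x` is `ℓ`-close to `y` if there is `v ∈ ℤ^{n+1}` with `rng(v) = ℓ`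
such that `x + Bv` is a closest lattice point to `y`.) -/
theorem minimizing_step_decreases_closeness
    (n m : ℕ) (b : Fin (n + 1) → EuclideanSpace ℝ (Fin m))
    (hb : LinearIndependent ℝ (fun i : Fin n => b i.castSucc))
    (Λ : Set (EuclideanSpace ℝ (Fin m)))
    (hΛ : Λ = {x | ∃ u : Fin n → ℤ, x = ∑ i, (u i : ℝ) • b i.castSucc})
    (hsum : ∑ i, b i = 0)
    (hobtuse : ∀ i j, i ≠ j → ⟪b i, b j⟫ ≤ 0)
    (z : Fin (n + 1) → ℝ) (u : Fin (n + 1) → ℤ)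
    (ℓ : ℕ) (hℓ : 0 < ℓ)
    (hclose : ∃ v : Fin (n + 1) → ℤ, rng v = (ℓ : ℤ) ∧
      ((∑ i, ((u i : ℝ) + (v i : ℝ)) • b i) ∈ Λ ∧
        ∀ x' ∈ Λ, ‖(∑ i, z i • b i) - ∑ i, ((u i : ℝ) + (v i : ℝ)) • b i‖ ≤
          ‖(∑ i, z i • b i) - x'‖))
    (g : Fin (n + 1) → ℤ) (hg : ∀ i, g i = 0 ∨ g i = 1)
    (hmin : ∀ t : Fin (n + 1) → ℤ, (∀ i, t i = 0 ∨ t i = 1) →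
      ‖∑ i, (z i - (u i : ℝ) - (g i : ℝ)) • b i‖ ^ 2 ≤
        ‖∑ i, (z i - (u i : ℝ) - (t i : ℝ)) • b i‖ ^ 2) :
    ∃ w : Fin (n + 1) → ℤ, rng w = (ℓ : ℤ) - 1 ∧
      ((∑ i, ((u i : ℝ) + (g i : ℝ) + (w i : ℝ)) • b i) ∈ Λ ∧
        ∀ x' ∈ Λ, ‖(∑ i, z i • b i) - ∑ i, ((u i : ℝ) + (g i : ℝ) + (w i : ℝ)) • b i‖ ≤
          ‖(∑ i, z i • b i) - x'‖) := by
  obtain ⟨v₀, hrng₀, hmem₀, hmin₀⟩ := hclose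
  have hl1 : (1 : ℤ) ≤ (ℓ : ℤ) := by exact_mod_cast hℓ
  -- global minimality of v₀ (hence v) among all integer coefficient vectors
  have hglobal : ∀ c : Fin (n + 1) → ℤ, Fq b z u v₀ ≤ Fq b z u c := by
    intro c
    have hc : (∑ i, ((u i : ℝ) + (c i : ℝ)) • b i) ∈ Λ := by
      have h := mem_lattice b hsum Λ hΛ (fun i => u i + c i)
      have e : ∑ i, (((fun i => u i + c i) i : ℤ) : ℝ) • b i
          = ∑ i, ((u i : ℝ) + (c i : ℝ)) • b i := by
        refine Finset.sum_congr rfl fun i _ => ?_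
        push_cast; ring_nf
      rwa [e] at h
    have h := hmin₀ _ hc
    rw [Fq_eq, Fq_eq]
    exact pow_le_pow_left₀ (norm_nonneg _) h 2
  have hgmin : ∀ t : Fin (n + 1) → ℤ, (∀ i, t i = 0 ∨ t i = 1) →
      Fq b z u g ≤ Fq b z u t := fun t ht => hmin t ht
  -- normalize v₀ to v with min 0
  set k : ℤ := Finset.univ.inf' Finset.univ_nonempty v₀ with hk
  obtain ⟨i0, -, hi0⟩ := Finset.exists_mem_eq_inf' (Finset.univ_nonempty) v₀
  obtain ⟨i1, -, hi1⟩ := Finset.exists_mem_eq_sup' (Finset.univ_nonempty) v₀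
  set v : Fin (n + 1) → ℤ := fun i => v₀ i - k with hv
  have hvnn : ∀ i, 0 ≤ v i := by
    intro i
    have := Finset.inf'_le v₀ (Finset.mem_univ i)
    simp only [hv]; omega
  have hvle : ∀ i, v i ≤ (ℓ : ℤ) := by
    intro i
    have h1 := Finset.le_sup' v₀ (Finset.mem_univ i)
    have h2 : Finset.univ.sup' Finset.univ_nonempty v₀
        - Finset.univ.inf' Finset.univ_nonempty v₀ = (ℓ : ℤ) := hrng₀
    simp only [hv]; omega
  have hvi0 : v i0 = 0 := by simp only [hv]; omega
  have hvi1 : v i1 = (ℓ : ℤ) := by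
    have h2 : Finset.univ.sup' Finset.univ_nonempty v₀
        - Finset.univ.inf' Finset.univ_nonempty v₀ = (ℓ : ℤ) := hrng₀
    simp only [hv]; omega
  have hFv : Fq b z u v = Fq b z u v₀ := by
    have h := Fq_shift b hsum z u v k
    have e : (fun i => v i + k) = v₀ := by funext i; simp only [hv]; ring
    rw [e] at h
    exact h.symm
  have hglob : ∀ c : Fin (n + 1) → ℤ, Fq b z u v ≤ Fq b z u c := fun c => hFv ▸ hglobal c
  -- step 1 : F (v ⊔ g) ≤ F v
  have step1 : Fq b z u (fun i => max (v i) (g i)) ≤ Fq b z u v := by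
    have h := Fq_submod b hobtuse z u v g
    have h01 : ∀ i, min (v i) (g i) = 0 ∨ min (v i) (g i) = 1 := by
      intro i; have := hvnn i; rcases hg i with h | h <;> omega
    have := hgmin _ h01
    linarith
  -- step 2 : F ((v ⊔ g) ⊓ (g + (ℓ-1))) ≤ F (v ⊔ g)
  set L : ℤ := (ℓ : ℤ) - 1 with hL
  have step2 : Fq b z u (fun i => min (max (v i) (g i)) (g i + L)) ≤
      Fq b z u (fun i => max (v i) (g i)) := by
    have h := Fq_submod b hobtuse z u (fun i => max (v i) (g i)) (fun i => g i + L)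
    have hgL : Fq b z u (fun i => g i + L) = Fq b z u g := Fq_shift b hsum z u g L
    have hh : Fq b z u (fun i => max (max (v i) (g i)) (g i + L)) =
        Fq b z u (fun i => max (max (v i) (g i)) (g i + L) - L) := by
      have h2 := Fq_shift b hsum z u (fun i => max (max (v i) (g i)) (g i + L) - L) L
      have e : (fun i => (max (max (v i) (g i)) (g i + L) - L) + L) =
          fun i => max (max (v i) (g i)) (g i + L) := by funext i; ring
      rw [e] at h2; rw [h2]
    have hh01 : ∀ i, max (max (v i) (g i)) (g i + L) - L = 0 ∨
        max (max (v i) (g i)) (g i + L) - L = 1 := by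
      intro i; have := hvnn i; have := hvle i; rcases hg i with h' | h' <;> omega
    have hhge : Fq b z u g ≤ Fq b z u (fun i => max (max (v i) (g i)) (g i + L) - L) :=
      hgmin _ hh01
    linarith
  -- the witness
  refine ⟨fun i => min (max (v i) (g i)) (g i + L) - g i, ?_, ?_, ?_⟩
  · -- rng = ℓ - 1
    have hwle : ∀ i, min (max (v i) (g i)) (g i + L) - g i ≤ L := by
      intro i; have := hvnn i; have := hvle i; rcases hg i with h' | h' <;> omega
    have hwnn : ∀ i, 0 ≤ min (max (v i) (g i)) (g i + L) - g i := by
      intro i; have := hvnn i; have := hvle i; rcases hg i with h' | h' <;> omega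
    have hwi1 : min (max (v i1) (g i1)) (g i1 + L) - g i1 = L := by
      have := hvi1; rcases hg i1 with h' | h' <;> omega
    have hwi0 : min (max (v i0) (g i0)) (g i0 + L) - g i0 = 0 := by
      have := hvi0; rcases hg i0 with h' | h' <;> omega
    have hsup : Finset.univ.sup' Finset.univ_nonempty
        (fun i => min (max (v i) (g i)) (g i + L) - g i) = L := by
      refine le_antisymm (Finset.sup'_le _ _ fun i _ => hwle i) ?_
      refine le_trans ?_ (Finset.le_sup'
        (fun i => min (max (v i) (g i)) (g i + L) - g i) (Finset.mem_univ i1))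
      simpa using hwi1.symm.le
    have hinf : Finset.univ.inf' Finset.univ_nonempty
        (fun i => min (max (v i) (g i)) (g i + L) - g i) = 0 := by
      refine le_antisymm ?_ (Finset.le_inf' _ _ fun i _ => hwnn i)
      refine le_trans (Finset.inf'_le
        (fun i => min (max (v i) (g i)) (g i + L) - g i) (Finset.mem_univ i0)) ?_
      simpa using hwi0.le
    unfold rng
    rw [hsup, hinf, hL]; ring
  · -- membership
    have h := mem_lattice b hsum Λ hΛ (fun i => u i + g i + (min (max (v i) (g i)) (g i + L) - g i))
    have e : ∑ i, (((fun i => u i + g i + (min (max (v i) (g i)) (g i + L) - g i)) i : ℤ) : ℝ) • b i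
        = ∑ i, ((u i : ℝ) + (g i : ℝ) + ((min (max (v i) (g i)) (g i + L) - g i : ℤ) : ℝ)) • b i := by
      refine Finset.sum_congr rfl fun i _ => ?_
      push_cast; ring_nf
    rwa [e] at h
  · -- minimality
    intro x' hx'
    have hchain : Fq b z u (fun i => g i + (min (max (v i) (g i)) (g i + L) - g i)) ≤ Fq b z u v₀ := by
      have e : (fun i => g i + (min (max (v i) (g i)) (g i + L) - g i)) =
          fun i => min (max (v i) (g i)) (g i + L) := by funext i; ring
      rw [e, ← hFv]
      exact le_trans step2 step1
    have h1 : Fq b z u v₀ ≤ ‖(∑ i, z i • b i) - x'‖^2 := by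
      rw [Fq_eq]
      exact pow_le_pow_left₀ (norm_nonneg _) (hmin₀ x' hx') 2
    have h2 : ‖(∑ i, z i • b i) - ∑ i, ((u i : ℝ) + (g i : ℝ) +
        ((min (max (v i) (g i)) (g i + L) - g i : ℤ) : ℝ)) • b i‖^2 ≤
        ‖(∑ i, z i • b i) - x'‖^2 := by
      have e : ∑ i, ((u i : ℝ) + (g i : ℝ) + ((min (max (v i) (g i)) (g i + L) - g i : ℤ) : ℝ)) • b i
          = ∑ i, ((u i : ℝ) + (((fun i => g i + (min (max (v i) (g i)) (g i + L) - g i)) i : ℤ) : ℝ)) • b i := by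
        refine Finset.sum_congr rfl fun i _ => ?_
        push_cast; ring_nf
      rw [e, ← Fq_eq]
      exact le_trans hchain h1
    exact le_of_pow_le_pow_left₀ two_ne_zero (norm_nonneg _) h2
end

section
/- Let Λ be an n-dimensional lattice of Voronoi's first kind in ℝ^m with obtuse superbasis b_1, …, b_{n+1}, let B be the linear map sending w ∈ ℝ^{n+1} to ∑_{i=1}^{n+1} w_i b_i, and let z ∈ ℝ^{n+1}. Define the sequence u_0, u_1, u_2, … in ℤ^{n+1} by u_0 = ⌊z⌋ (componentwise floor) and u_{k+1} = u_k + t_k, where t_k ∈ {0,1}^{n+1} is any minimizer of ‖B(z − u_k − t)‖² over t ∈ {0,1}^{n+1}. Then there exists K ≤ n such that B u_K is a closest lattice point of Λ to y = Bz. -/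
open scoped RealInnerProductSpace

section VFKAux
variable {N m : ℕ} (b : Fin N → EuclideanSpace ℝ (Fin m))

/-- the map `w ↦ ∑ i, w i • b i`. -/
noncomputable def VFK.Bv (x : Fin N → ℝ) : EuclideanSpace ℝ (Fin m) := ∑ i, x i • b i

namespace VFK

lemma Bv_add (x y : Fin N → ℝ) : Bv b (x + y) = Bv b x + Bv b y := by
  simp [Bv, add_smul, Finset.sum_add_distrib]

lemma Bv_sub (x y : Fin N → ℝ) : Bv b (x - y) = Bv b x - Bv b y := by
  simp [Bv, sub_smul, Finset.sum_sub_distrib]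

lemma inner_Bv (x y : Fin N → ℝ) :
    ⟪Bv b x, Bv b y⟫ = ∑ i, ∑ j, x i * y j * ⟪b i, b j⟫ := by
  simp only [Bv, sum_inner, inner_sum, real_inner_smul_left, real_inner_smul_right]
  rw [Finset.sum_comm]
  refine Finset.sum_congr rfl fun i _ => Finset.sum_congr rfl fun j _ => by ring

lemma pair_identity (hsum : ∑ i, b i = 0) (x y : Fin N → ℝ) :
    2 * ⟪Bv b x, Bv b y⟫ = -∑ i, ∑ j, ⟪b i, b j⟫ * (x i - x j) * (y i - y j) := by
  have h0 : ∀ i, ∑ j, ⟪b i, b j⟫ = (0:ℝ) := fun i => by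
    rw [← inner_sum, hsum, inner_zero_right]
  have h0' : ∀ j, ∑ i, ⟪b i, b j⟫ = (0:ℝ) := fun j => by
    rw [← sum_inner, hsum, inner_zero_left]
  have hsym : ∀ i j, ⟪b i, b j⟫ = ⟪b j, b i⟫ := fun i j => real_inner_comm _ _
  have expand : ∀ i j, ⟪b i, b j⟫ * (x i - x j) * (y i - y j)
      = (x i * y i) * ⟪b i, b j⟫ + (x j * y j) * ⟪b i, b j⟫
        - (x i * y j * ⟪b i, b j⟫) - (x j * y i * ⟪b i, b j⟫) := fun i j => by ring
  have hS1 : ∑ i, ∑ j, (x i * y i) * ⟪b i, b j⟫ = 0 := by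
    refine Finset.sum_eq_zero fun i _ => ?_
    rw [← Finset.mul_sum, h0, mul_zero]
  have hS4 : ∑ i, ∑ j, (x j * y j) * ⟪b i, b j⟫ = 0 := by
    rw [Finset.sum_comm]
    refine Finset.sum_eq_zero fun j _ => ?_
    rw [← Finset.mul_sum, h0', mul_zero]
  have hS3 : ∑ i, ∑ j, x j * y i * ⟪b i, b j⟫ = ∑ i, ∑ j, x i * y j * ⟪b i, b j⟫ := by
    rw [Finset.sum_comm]
    refine Finset.sum_congr rfl fun i _ => Finset.sum_congr rfl fun j _ => by
      rw [hsym]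
  calc 2 * ⟪Bv b x, Bv b y⟫ = 2 * ∑ i, ∑ j, x i * y j * ⟪b i, b j⟫ := by rw [inner_Bv]
  _ = -((∑ i, ∑ j, (x i * y i) * ⟪b i, b j⟫) + (∑ i, ∑ j, (x j * y j) * ⟪b i, b j⟫)
        - (∑ i, ∑ j, x i * y j * ⟪b i, b j⟫) - (∑ i, ∑ j, x j * y i * ⟪b i, b j⟫)) := by
      rw [hS1, hS4, hS3]; ring
  _ = -∑ i, ∑ j, ⟪b i, b j⟫ * (x i - x j) * (y i - y j) := by
      rw [← Finset.sum_add_distrib, ← Finset.sum_sub_distrib, ← Finset.sum_sub_distrib]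
      congr 1
      refine Finset.sum_congr rfl fun i _ => ?_
      rw [← Finset.sum_add_distrib, ← Finset.sum_sub_distrib, ← Finset.sum_sub_distrib]
      exact Finset.sum_congr rfl fun j _ => by rw [expand]

lemma inner_Bv_nonneg (hsum : ∑ i, b i = 0)
    (hobtuse : ∀ i j, i ≠ j → ⟪b i, b j⟫ ≤ 0) (x y : Fin N → ℝ)
    (hxy : ∀ i j, i ≠ j → 0 ≤ (x i - x j) * (y i - y j)) :
    0 ≤ ⟪Bv b x, Bv b y⟫ := by
  have h := pair_identity b hsum x y
  have hterm : ∑ i, ∑ j, ⟪b i, b j⟫ * (x i - x j) * (y i - y j) ≤ 0 := by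
    refine Finset.sum_nonpos fun i _ => Finset.sum_nonpos fun j _ => ?_
    rcases eq_or_ne i j with rfl | hij
    · simp
    · rw [mul_assoc]
      exact mul_nonpos_of_nonpos_of_nonneg (hobtuse i j hij) (hxy i j hij)
  nlinarith [h]

lemma inner_Bv_nonpos (hsum : ∑ i, b i = 0)
    (hobtuse : ∀ i j, i ≠ j → ⟪b i, b j⟫ ≤ 0) (x y : Fin N → ℝ)
    (hxy : ∀ i j, i ≠ j → (x i - x j) * (y i - y j) ≤ 0) :
    ⟪Bv b x, Bv b y⟫ ≤ 0 := by
  have h := inner_Bv_nonneg b hsum hobtuse (-x) y (fun i j hij => by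
    have := hxy i j hij
    simp only [Pi.neg_apply]
    nlinarith)
  have hneg : Bv b (-x) = -(Bv b x) := by simp [Bv]
  rw [hneg, inner_neg_left] at h
  linarith

lemma inner_Bv_disj (hobtuse : ∀ i j, i ≠ j → ⟪b i, b j⟫ ≤ 0) (p q : Fin N → ℝ)
    (hp : ∀ i, 0 ≤ p i) (hq : ∀ i, 0 ≤ q i) (hdisj : ∀ i, p i = 0 ∨ q i = 0) :
    ⟪Bv b p, Bv b q⟫ ≤ 0 := by
  rw [inner_Bv]
  refine Finset.sum_nonpos fun i _ => Finset.sum_nonpos fun j _ => ?_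
  rcases eq_or_ne i j with rfl | hij
  · rcases hdisj i with h | h <;> simp [h]
  · exact mul_nonpos_of_nonneg_of_nonpos (mul_nonneg (hp i) (hq j)) (hobtuse i j hij)

/-- parallelogram-type identity used for submodularity. -/
lemma key_id {V : Type*} [NormedAddCommGroup V] [InnerProductSpace ℝ V] (Y P Q : V) :
    ‖Y - (P + Q)‖^2 + ‖Y‖^2 - ‖Y - P‖^2 - ‖Y - Q‖^2 = 2 * ⟪P, Q⟫ := by
  simp only [norm_sub_sq_real, norm_add_sq_real, inner_add_right]
  ring

end VFK
end VFKAux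

namespace VFK
variable {n m : ℕ}

noncomputable def Tmap (b : Fin (n+1) → EuclideanSpace ℝ (Fin m)) :
    (Fin n → ℝ) →ₗ[ℝ] EuclideanSpace ℝ (Fin m) where
  toFun x := ∑ i, x i • b i.castSucc
  map_add' x y := by simp [add_smul, Finset.sum_add_distrib]
  map_smul' c x := by simp [mul_smul, Finset.smul_sum]

lemma bridge (b : Fin (n+1) → EuclideanSpace ℝ (Fin m)) (hsum : ∑ i, b i = 0)
    (x : Fin (n+1) → ℝ) :
    Bv b x = Tmap b (fun i => x i.castSucc - x (Fin.last n)) := by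
  have hlast : b (Fin.last n) = -∑ i : Fin n, b i.castSucc := by
    rw [Fin.sum_univ_castSucc] at hsum
    exact eq_neg_of_add_eq_zero_right hsum
  show ∑ i, x i • b i = ∑ i : Fin n, (x i.castSucc - x (Fin.last n)) • b i.castSucc
  rw [Fin.sum_univ_castSucc, hlast]
  simp only [sub_smul, Finset.sum_sub_distrib, smul_neg, Finset.smul_sum]
  abel

lemma exists_glob_min (b : Fin (n+1) → EuclideanSpace ℝ (Fin m))
    (hb : LinearIndependent ℝ (fun i : Fin n => b i.castSucc))
    (hsum : ∑ i, b i = 0) (y : EuclideanSpace ℝ (Fin m)) :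
    ∃ v : Fin (n+1) → ℤ, ∀ w : Fin (n+1) → ℤ,
      ‖y - Bv b (fun i => (v i : ℝ))‖ ≤ ‖y - Bv b (fun i => (w i : ℝ))‖ := by
  set T := Tmap b with hT
  have hker : LinearMap.ker T = ⊥ := by
    rw [LinearMap.ker_eq_bot']
    intro x hx
    exact funext fun i => Fintype.linearIndependent_iff.mp hb x hx i
  obtain ⟨K, hK0, hKa⟩ := T.exists_antilipschitzWith hker
  set R : ℝ := (K : ℝ) * (2 * ‖y‖) with hR
  set c : ℤ := max ⌈R⌉ 0 with hc
  set S : Finset (Fin n → ℤ) := Finset.Icc (fun _ => -c) (fun _ => c) with hS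
  have h0S : (0 : Fin n → ℤ) ∈ S := by
    rw [hS, Finset.mem_Icc]
    constructor <;> intro i <;> simp [hc] <;> positivity
  obtain ⟨g0, hg0S, hmin⟩ :=
    Finset.exists_min_image S (fun g => ‖y - T (fun i => (g i : ℝ))‖) ⟨0, h0S⟩
  have hT0 : T (fun i => ((0:ℤ) : ℝ)) = 0 := by
    have : (fun i : Fin n => ((0:ℤ):ℝ)) = (0 : Fin n → ℝ) := by funext i; simp
    rw [this, map_zero]
  have key : ∀ g : Fin n → ℤ,
      ‖y - T (fun i => (g0 i : ℝ))‖ ≤ ‖y - T (fun i => (g i : ℝ))‖ := by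
    intro g
    by_cases hle : ‖y - T (fun i => (g i : ℝ))‖ ≤ ‖y‖
    · refine hmin g ?_
      have hTg : ‖T (fun i => (g i : ℝ))‖ ≤ 2 * ‖y‖ := by
        have h1 : ‖T (fun i => (g i : ℝ))‖ ≤ ‖T (fun i => (g i : ℝ)) - y‖ + ‖y‖ := by
          calc ‖T (fun i => (g i : ℝ))‖ = ‖T (fun i => (g i : ℝ)) - y + y‖ := by
                rw [sub_add_cancel]
          _ ≤ ‖T (fun i => (g i : ℝ)) - y‖ + ‖y‖ := norm_add_le _ _
        rw [norm_sub_rev] at h1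
        linarith
      have hnorm : ‖(fun i => (g i : ℝ))‖ ≤ R := by
        have h2 := hKa.le_mul_dist (fun i => (g i : ℝ)) (fun i => ((0:ℤ):ℝ))
        rw [hT0] at h2
        simp only [dist_eq_norm, sub_zero] at h2
        have heq : (fun i => (g i : ℝ)) - (fun i => ((0:ℤ):ℝ)) = (fun i => (g i : ℝ)) := by
          funext i; simp
        rw [heq] at h2
        calc ‖(fun i => (g i : ℝ))‖ ≤ (K:ℝ) * ‖T (fun i => (g i : ℝ))‖ := h2
        _ ≤ (K:ℝ) * (2 * ‖y‖) := by
            have := K.2; exact mul_le_mul_of_nonneg_left hTg (by exact_mod_cast this)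
        _ = R := rfl
      rw [hS, Finset.mem_Icc]
      have hcoord : ∀ i, |(g i : ℝ)| ≤ (c : ℝ) := by
        intro i
        have hpi := norm_le_pi_norm (fun i => (g i : ℝ)) i
        rw [Real.norm_eq_abs] at hpi
        calc |(g i : ℝ)| ≤ ‖(fun i => (g i : ℝ))‖ := hpi
        _ ≤ R := hnorm
        _ ≤ (⌈R⌉ : ℝ) := Int.le_ceil R
        _ ≤ (c : ℝ) := by exact_mod_cast le_max_left _ _
      constructor <;> intro i
      · have := (abs_le.mp (hcoord i)).1
        simpa using (by exact_mod_cast this : -c ≤ g i)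
      · exact_mod_cast (abs_le.mp (hcoord i)).2
    · push_neg at hle
      calc ‖y - T (fun i => (g0 i : ℝ))‖ ≤ ‖y - T (fun i => ((0:ℤ) : ℝ))‖ := hmin 0 h0S
      _ = ‖y‖ := by rw [hT0, sub_zero]
      _ ≤ ‖y - T (fun i => (g i : ℝ))‖ := le_of_lt hle
  refine ⟨Fin.snoc g0 0, fun w => ?_⟩
  have hv : Bv b (fun i => ((Fin.snoc g0 0 : Fin (n+1) → ℤ) i : ℝ))
      = T (fun i => (g0 i : ℝ)) := by
    rw [bridge b hsum]
    congr 1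
    funext i
    simp [Fin.snoc_castSucc, Fin.snoc_last]
  have hw : Bv b (fun i => ((w i : ℤ) : ℝ))
      = T (fun i => ((w i.castSucc - w (Fin.last n) : ℤ) : ℝ)) := by
    rw [bridge b hsum]
    congr 1
    funext i
    push_cast
    ring
  rw [hv, hw]
  exact key _


noncomputable def Cv (b : Fin N → EuclideanSpace ℝ (Fin m)) (w : Fin N → ℤ) :
    EuclideanSpace ℝ (Fin m) := Bv b (fun i => (w i : ℝ))

lemma coe_add (v w : Fin N → ℤ) :
    (fun i => (((v + w) i : ℤ) : ℝ)) = (fun i => ((v i : ℤ) : ℝ)) + (fun i => ((w i : ℤ) : ℝ)) := by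
  funext i; simp [Pi.add_apply]

lemma coe_sub (v w : Fin N → ℤ) :
    (fun i => (((v - w) i : ℤ) : ℝ)) = (fun i => ((v i : ℤ) : ℝ)) - (fun i => ((w i : ℤ) : ℝ)) := by
  funext i; simp [Pi.sub_apply]

lemma Cv_add (b : Fin N → EuclideanSpace ℝ (Fin m)) (v w : Fin N → ℤ) :
    Cv b (v + w) = Cv b v + Cv b w := by
  rw [Cv, coe_add, Bv_add]; rfl

lemma Cv_sub (b : Fin N → EuclideanSpace ℝ (Fin m)) (v w : Fin N → ℤ) :
    Cv b (v - w) = Cv b v - Cv b w := by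
  rw [Cv, coe_sub, Bv_sub]; rfl

noncomputable def gq (b : Fin N → EuclideanSpace ℝ (Fin m)) (z : Fin N → ℝ)
    (w : Fin N → ℤ) : ℝ := ‖Bv b z - Cv b w‖ ^ 2

lemma conv_sum (b : Fin N → EuclideanSpace ℝ (Fin m)) (z : Fin N → ℝ) (w s : Fin N → ℤ) :
    (∑ i, (z i - (w i : ℝ) - (s i : ℝ)) • b i) = Bv b z - Cv b (w + s) := by
  have h : (fun i => z i - (w i : ℝ) - (s i : ℝ)) = z - fun i => (((w + s) i : ℤ) : ℝ) := by
    funext i; simp only [Pi.sub_apply, Pi.add_apply]; push_cast; ring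
  calc (∑ i, (z i - (w i : ℝ) - (s i : ℝ)) • b i)
      = Bv b (fun i => z i - (w i : ℝ) - (s i : ℝ)) := rfl
  _ = Bv b (z - fun i => (((w + s) i : ℤ) : ℝ)) := by rw [h]
  _ = Bv b z - Cv b (w + s) := by rw [Bv_sub]; rfl

lemma gq_shift (b : Fin N → EuclideanSpace ℝ (Fin m)) (hsum : ∑ i, b i = 0)
    (z : Fin N → ℝ) (w : Fin N → ℤ) (c : ℤ) :
    gq b z (w + fun _ => c) = gq b z w := by
  have hc : Cv b (fun _ => c) = 0 := by
    show (∑ i, ((c : ℝ)) • b i) = 0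
    rw [← Finset.smul_sum, hsum, smul_zero]
  rw [gq, Cv_add, hc, add_zero, gq]

lemma join (b : Fin N → EuclideanSpace ℝ (Fin m))
    (hobtuse : ∀ i j, i ≠ j → ⟪b i, b j⟫ ≤ 0) (z : Fin N → ℝ)
    (uu vv t : Fin N → ℤ) (ht01 : ∀ i, t i = 0 ∨ t i = 1)
    (huv : ∀ i, uu i ≤ vv i)
    (hmin : ∀ s : Fin N → ℤ, (∀ i, s i = 0 ∨ s i = 1) → gq b z (uu + t) ≤ gq b z (uu + s))
    (hglob : ∀ w, gq b z vv ≤ gq b z w) :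
    ∀ w, gq b z (fun i => max (vv i) (uu i + t i)) ≤ gq b z w := by
  intro w
  set a : Fin N → ℤ := fun i => min (vv i) (uu i + t i) with ha
  set p : Fin N → ℤ := fun i => vv i - a i with hp
  set q : Fin N → ℤ := fun i => uu i + t i - a i with hq
  have e1 : (fun i => max (vv i) (uu i + t i)) = a + (p + q) := by
    funext i; simp only [Pi.add_apply, ha, hp, hq]; omega
  have e2 : vv = a + p := by funext i; simp only [Pi.add_apply, ha, hp]; omega
  have e3 : uu + t = a + q := by funext i; simp only [Pi.add_apply, ha, hp, hq]; omega
  have hs0 : ∀ i, a i - uu i = 0 ∨ a i - uu i = 1 := by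
    intro i; have := huv i; rcases ht01 i with h | h <;> simp only [ha] <;> omega
  have ea : a = uu + fun i => a i - uu i := by funext i; simp only [Pi.add_apply]; ring
  have hga : gq b z (uu + t) ≤ gq b z a := by
    rw [ea]; exact hmin _ hs0
  have hid := key_id (Bv b z - Cv b a) (Cv b p) (Cv b q)
  have hpq : ⟪Cv b p, Cv b q⟫ ≤ 0 := by
    refine inner_Bv_disj b hobtuse _ _ (fun i => ?_) (fun i => ?_) (fun i => ?_)
    · have h : (0:ℤ) ≤ p i := by simp only [hp, ha]; omega
      exact_mod_cast h
    · have h : (0:ℤ) ≤ q i := by simp only [hq, ha]; omega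
      exact_mod_cast h
    · have h : p i = 0 ∨ q i = 0 := by simp only [hp, hq, ha]; omega
      rcases h with h | h
      · left; rw [h]; norm_num
      · right; rw [h]; norm_num
  have egj : gq b z (fun i => max (vv i) (uu i + t i))
      = ‖(Bv b z - Cv b a) - (Cv b p + Cv b q)‖ ^ 2 := by
    rw [gq, e1, Cv_add, Cv_add]; congr 1; abel
  have egv : gq b z vv = ‖(Bv b z - Cv b a) - Cv b p‖ ^ 2 := by
    rw [gq, e2, Cv_add]; congr 1; abel
  have egu : gq b z (uu + t) = ‖(Bv b z - Cv b a) - Cv b q‖ ^ 2 := by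
    rw [gq, e3, Cv_add]; congr 1; abel
  have ega : gq b z a = ‖Bv b z - Cv b a‖ ^ 2 := rfl
  have hle : gq b z (fun i => max (vv i) (uu i + t i)) ≤ gq b z vv := by
    rw [egj, egv]
    rw [egu, ega] at hga
    linarith [hid]
  exact le_trans hle (hglob w)

lemma topfix (b : Fin N → EuclideanSpace ℝ (Fin m)) (hsum : ∑ i, b i = 0)
    (hobtuse : ∀ i j, i ≠ j → ⟪b i, b j⟫ ≤ 0) (z : Fin N → ℝ)
    (uu vv t : Fin N → ℤ) (M : ℤ) (ht01 : ∀ i, t i = 0 ∨ t i = 1)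
    (hvM : ∀ i, vv i ≤ uu i + M)
    (hmin : ∀ s : Fin N → ℤ, (∀ i, s i = 0 ∨ s i = 1) → gq b z (uu + t) ≤ gq b z (uu + s))
    (hglob : ∀ w, gq b z vv ≤ gq b z w) :
    ∀ w, gq b z (vv - fun i => if vv i = uu i + M ∧ t i = 0 then 1 else 0) ≤ gq b z w := by
  intro w
  set χ : Fin N → ℤ := fun i => if vv i = uu i + M ∧ t i = 0 then 1 else 0 with hχ
  have hχval : ∀ i, (χ i = 1 ∧ vv i = uu i + M ∧ t i = 0) ∨
      (χ i = 0 ∧ ¬(vv i = uu i + M ∧ t i = 0)) := by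
    intro i
    by_cases h : vv i = uu i + M ∧ t i = 0
    · left; exact ⟨by simp [hχ, h], h⟩
    · right; exact ⟨by simp [hχ, h], h⟩
  have htχ : ∀ i, (t + χ) i = 0 ∨ (t + χ) i = 1 := by
    intro i
    rcases hχval i with ⟨h1, _, h3⟩ | ⟨h1, _⟩ <;> rcases ht01 i with h | h <;>
      simp only [Pi.add_apply] <;> omega
  have h1 : gq b z (uu + t) ≤ gq b z (uu + (t + χ)) := hmin _ htχ
  have e4 : gq b z (uu + (t + χ))
      = ‖(Bv b z - Cv b (uu + t)) - Cv b χ‖ ^ 2 := by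
    rw [gq, show uu + (t + χ) = (uu + t) + χ from by rw [add_assoc], Cv_add]
    congr 1; abel
  have hY1X : 2 * ⟪Bv b z - Cv b (uu + t), Cv b χ⟫ ≤ ‖Cv b χ‖ ^ 2 := by
    rw [e4, norm_sub_sq_real] at h1
    have h0 : gq b z (uu + t) = ‖Bv b z - Cv b (uu + t)‖ ^ 2 := rfl
    rw [h0] at h1; linarith
  have e5 : gq b z (vv - χ) = ‖(Bv b z - Cv b vv) + Cv b χ‖ ^ 2 := by
    rw [gq, Cv_sub]; congr 1; abel
  have hZ : ∀ i j, i ≠ j → (0:ℤ) ≤ ((vv i - uu i - t i - χ i) - (vv j - uu j - t j - χ j))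
      * (χ i - χ j) := by
    intro i j _
    rcases hχval i with ⟨hi1, hi2, hi3⟩ | ⟨hi1, hi2⟩ <;>
      rcases hχval j with ⟨hj1, hj2, hj3⟩ | ⟨hj1, hj2⟩
    · rw [hi1, hj1]; simp
    · rw [hi1, hj1]
      have h4 := hvM j; have h5 := ht01 j
      have hA : (0:ℤ) ≤ (vv i - uu i - t i - 1) - (vv j - uu j - t j - 0) := by omega
      nlinarith [hA]
    · rw [hi1, hj1]
      have h4 := hvM i; have h5 := ht01 i
      have hA : (vv i - uu i - t i - 0) - (vv j - uu j - t j - 1) ≤ 0 := by omega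
      nlinarith [hA]
    · rw [hi1, hj1]; simp
  have hE : (0:ℝ) ≤ ⟪Cv b (vv - (uu + t) - χ), Cv b χ⟫ := by
    refine inner_Bv_nonneg b hsum hobtuse _ _ (fun i j hij => ?_)
    have hz := hZ i j hij
    have h7 : ((vv - (uu + t) - χ) i : ℝ) - ((vv - (uu + t) - χ) j : ℝ)
        = (((vv i - uu i - t i - χ i) - (vv j - uu j - t j - χ j) : ℤ) : ℝ) := by
      simp only [Pi.sub_apply, Pi.add_apply]; push_cast; ring
    rw [h7, show ((χ i : ℝ) - (χ j : ℝ)) = (((χ i - χ j : ℤ)) : ℝ) from by push_cast; ring,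
      ← Int.cast_mul]
    exact_mod_cast hz
  have hE2 : ‖Cv b χ‖ ^ 2 ≤ ⟪Cv b (vv - (uu + t)), Cv b χ⟫ := by
    rw [Cv_sub, inner_sub_left] at hE
    have h6 : ⟪Cv b χ, Cv b χ⟫ = ‖Cv b χ‖ ^ 2 := real_inner_self_eq_norm_sq _
    linarith [hE]
  have hY21 : ⟪Bv b z - Cv b vv, Cv b χ⟫
      = ⟪Bv b z - Cv b (uu + t), Cv b χ⟫ - ⟪Cv b (vv - (uu + t)), Cv b χ⟫ := by
    rw [Cv_sub, ← inner_sub_left]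
    congr 1; abel
  have hfin : gq b z (vv - χ) ≤ gq b z vv := by
    rw [e5, norm_add_sq_real]
    have h0 : gq b z vv = ‖Bv b z - Cv b vv‖ ^ 2 := rfl
    rw [h0]
    linarith [hY1X, hE2, hY21]
  exact le_trans hfin (hglob w)

/-- one iteration step: the invariant interval shrinks by one. -/
lemma steplem (b : Fin N → EuclideanSpace ℝ (Fin m)) (hsum : ∑ i, b i = 0)
    (hobtuse : ∀ i j, i ≠ j → ⟪b i, b j⟫ ≤ 0) (z : Fin N → ℝ)
    (uu t vv : Fin N → ℤ) (M : ℤ) (hM : 1 ≤ M)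
    (ht01 : ∀ i, t i = 0 ∨ t i = 1)
    (huv : ∀ i, uu i ≤ vv i) (hvM : ∀ i, vv i ≤ uu i + M)
    (hmin : ∀ s : Fin N → ℤ, (∀ i, s i = 0 ∨ s i = 1) → gq b z (uu + t) ≤ gq b z (uu + s))
    (hglob : ∀ w, gq b z vv ≤ gq b z w) :
    ∃ v' : Fin N → ℤ, (∀ w, gq b z v' ≤ gq b z w) ∧
      (∀ i, (uu + t) i ≤ v' i) ∧ (∀ i, v' i ≤ (uu + t) i + (M - 1)) := by
  set χ : Fin N → ℤ := fun i => if vv i = uu i + M ∧ t i = 0 then 1 else 0 with hχ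
  have hχval : ∀ i, (χ i = 1 ∧ vv i = uu i + M ∧ t i = 0) ∨
      (χ i = 0 ∧ ¬(vv i = uu i + M ∧ t i = 0)) := by
    intro i
    by_cases h : vv i = uu i + M ∧ t i = 0
    · left; exact ⟨by simp [hχ, h], h⟩
    · right; exact ⟨by simp [hχ, h], h⟩
  have hglob1 : ∀ w, gq b z (vv - χ) ≤ gq b z w :=
    topfix b hsum hobtuse z uu vv t M ht01 hvM hmin hglob
  have huv1 : ∀ i, uu i ≤ (vv - χ) i := by
    intro i
    rcases hχval i with ⟨h1, h2, _⟩ | ⟨h1, _⟩ <;> have h3 := huv i <;>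
      simp only [Pi.sub_apply] <;> omega
  have hglob2 := join b hobtuse z uu (vv - χ) t ht01 huv1 hmin hglob1
  refine ⟨fun i => max ((vv - χ) i) (uu i + t i), hglob2, fun i => ?_, fun i => ?_⟩
  · simp only [Pi.add_apply]; omega
  · rcases hχval i with ⟨h1, h2, h4⟩ | ⟨h1, h2⟩ <;> have h3 := hvM i <;>
      have h5 := ht01 i <;> simp only [Pi.sub_apply, Pi.add_apply] <;> omega

/-- gap descent: from any global minimizer above `u0` produce one within distance `N - 1`. -/
lemma gap_descent (b : Fin N → EuclideanSpace ℝ (Fin m)) (hsum : ∑ i, b i = 0)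
    (hobtuse : ∀ i j, i ≠ j → ⟪b i, b j⟫ ≤ 0) (z : Fin N → ℝ)
    (u0 : Fin N → ℤ) (hfl : ∀ i, (u0 i : ℝ) ≤ z i ∧ z i < u0 i + 1) :
    ∀ M : ℕ, ∀ v : Fin N → ℤ, (∀ w, gq b z v ≤ gq b z w) → (∀ i, u0 i ≤ v i) →
    (∃ i0, v i0 = u0 i0) → (∀ i, v i ≤ u0 i + M) →
    ∃ v' : Fin N → ℤ, (∀ w, gq b z v' ≤ gq b z w) ∧ (∀ i, u0 i ≤ v' i) ∧
      (∀ i, v' i ≤ u0 i + ((N : ℤ) - 1)) := by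
  intro M
  induction M using Nat.strong_induction_on with
  | _ M IH =>
    intro v hg hl hex hu
    obtain ⟨i0, hi0⟩ := hex
    have hNpos : 0 < N := i0.pos
    by_cases hMn : (M : ℤ) ≤ (N : ℤ) - 1
    · exact ⟨v, hg, hl, fun i => le_trans (hu i) (by linarith [hMn])⟩
    · push_neg at hMn
      by_cases hmax : ∀ i, v i ≤ u0 i + ((M : ℤ) - 1)
      · have hM1 : M - 1 < M := by omega
        refine IH (M - 1) hM1 v hg hl ⟨i0, hi0⟩ (fun i => ?_)
        have := hmax i
        have hcast : ((M - 1 : ℕ) : ℤ) = (M : ℤ) - 1 := by omega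
        omega
      · push_neg at hmax
        obtain ⟨iM, hiM⟩ := hmax
        have hiM' : v iM = u0 iM + M := by have := hu iM; omega
        -- gap existence
        have hgap : ∃ c : ℤ, 1 ≤ c ∧ c ≤ (M : ℤ) - 1 ∧ ∀ i, v i - u0 i ≠ c := by
          by_contra hcon
          push_neg at hcon
          have hsub : insert (0 : ℤ) (insert ((M : ℤ)) (Finset.Icc 1 ((M : ℤ) - 1)))
              ⊆ Finset.image (fun i => v i - u0 i) Finset.univ := by
            intro c hc
            simp only [Finset.mem_insert, Finset.mem_Icc] at hc
            rw [Finset.mem_image]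
            rcases hc with rfl | rfl | ⟨hc1, hc2⟩
            · exact ⟨i0, Finset.mem_univ _, by omega⟩
            · exact ⟨iM, Finset.mem_univ _, by omega⟩
            · obtain ⟨i, hi⟩ := hcon c hc1 hc2
              exact ⟨i, Finset.mem_univ _, hi⟩
          have hcard := Finset.card_le_card hsub
          have hM0 : (1 : ℤ) ≤ (M : ℤ) := by omega
          rw [Finset.card_insert_of_notMem (by
                simp only [Finset.mem_insert, Finset.mem_Icc]
                push_neg
                exact ⟨by omega, fun h => by omega⟩),
              Finset.card_insert_of_notMem (by
                simp only [Finset.mem_Icc]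
                push_neg
                intro h; omega),
              Int.card_Icc] at hcard
          have himg : (Finset.image (fun i => v i - u0 i) Finset.univ).card ≤ N := by
            refine le_trans (Finset.card_image_le) (by simp)
          omega
        obtain ⟨c, hc1, hc2, hcgap⟩ := hgap
        set χ : Fin N → ℤ := fun i => if c < v i - u0 i then 1 else 0 with hχ
        have hχval : ∀ i, (χ i = 1 ∧ c < v i - u0 i) ∨ (χ i = 0 ∧ v i - u0 i ≤ c) := by
          intro i
          by_cases h : c < v i - u0 i
          · left; exact ⟨by simp [hχ, h], h⟩
          · right; exact ⟨by simp [hχ, h], by omega⟩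
        -- the down-shift is still a global minimizer
        have hgap_glob : ∀ w, gq b z (v - χ) ≤ gq b z w := by
          have hmain : gq b z (v - χ) ≤ gq b z v := by
            have e5 : gq b z (v - χ) = ‖(Bv b z - Cv b v) + Cv b χ‖ ^ 2 := by
              rw [gq, Cv_sub]; congr 1; abel
            have hxe : Bv b (fun i => 2 * (z i - (v i : ℝ)) + (χ i : ℝ))
                = (2 : ℝ) • (Bv b z - Cv b v) + Cv b χ := by
              have h1 : (fun i => 2 * (z i - (v i : ℝ)) + (χ i : ℝ))
                  = (2 : ℝ) • (z - fun i => (v i : ℝ)) + fun i => (χ i : ℝ) := by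
                funext i
                simp only [Pi.add_apply, Pi.smul_apply, Pi.sub_apply, smul_eq_mul]
                try ring
              rw [h1, Bv_add, show (2:ℝ) • (z - fun i => (v i : ℝ))
                    = (z - fun i => (v i : ℝ)) + (z - fun i => (v i : ℝ)) from two_smul ℝ _,
                  Bv_add, Bv_sub, ← two_smul ℝ]
              try rfl
            have hneg : ⟪Bv b (fun i => 2 * (z i - (v i : ℝ)) + (χ i : ℝ)),
                Bv b (fun i => (χ i : ℝ))⟫ ≤ 0 := by
              refine inner_Bv_nonpos b hsum hobtuse _ _ (fun i j hij => ?_)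
              rcases hχval i with ⟨hi1, hi2⟩ | ⟨hi1, hi2⟩ <;>
                rcases hχval j with ⟨hj1, hj2⟩ | ⟨hj1, hj2⟩
              · rw [hi1, hj1]; simp
              · -- χ i = 1, χ j = 0 : d i ≥ c+1, d j ≤ c-1 (using the gap)
                rw [hi1, hj1]
                have hdj : v j - u0 j ≤ c - 1 := by have := hcgap j; omega
                have hfi := hfl i; have hfj := hfl j
                have hdi' : ((c : ℝ) + 1) ≤ ((v i : ℝ) - u0 i) := by exact_mod_cast hi2
                have hdj' : ((v j : ℝ) - u0 j) ≤ (c : ℝ) - 1 := by exact_mod_cast hdj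
                have hx : (2 * (z i - (v i : ℝ)) + 1) - (2 * (z j - (v j : ℝ)) + 0) ≤ 0 := by
                  nlinarith [hfi.1, hfi.2, hfj.1, hfj.2]
                push_cast
                nlinarith [hx]
              · rw [hi1, hj1]
                have hdi : v i - u0 i ≤ c - 1 := by have := hcgap i; omega
                have hfi := hfl i; have hfj := hfl j
                have hdj' : ((c : ℝ) + 1) ≤ ((v j : ℝ) - u0 j) := by exact_mod_cast hj2
                have hdi' : ((v i : ℝ) - u0 i) ≤ (c : ℝ) - 1 := by exact_mod_cast hdi
                have hx : (0 : ℝ) ≤ (2 * (z i - (v i : ℝ)) + 0) - (2 * (z j - (v j : ℝ)) + 1) := by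
                  nlinarith [hfi.1, hfi.2, hfj.1, hfj.2]
                push_cast
                nlinarith [hx]
              · rw [hi1, hj1]; simp
            rw [hxe] at hneg
            have hCχ : Cv b χ = Bv b (fun i => (χ i : ℝ)) := rfl
            rw [← hCχ] at hneg
            rw [e5, norm_add_sq_real]
            have h8 : ⟪(2 : ℝ) • (Bv b z - Cv b v) + Cv b χ, Cv b χ⟫
                = 2 * ⟪Bv b z - Cv b v, Cv b χ⟫ + ‖Cv b χ‖ ^ 2 := by
              rw [inner_add_left, real_inner_smul_left, real_inner_self_eq_norm_sq]
            rw [h8] at hneg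
            have h0 : gq b z v = ‖Bv b z - Cv b v‖ ^ 2 := rfl
            rw [h0]
            linarith [hneg]
          exact fun w => le_trans hmain (hg w)
        have hM1 : M - 1 < M := by omega
        refine IH (M - 1) hM1 (v - χ) hgap_glob (fun i => ?_) ⟨i0, ?_⟩ (fun i => ?_)
        · rcases hχval i with ⟨h1, h2⟩ | ⟨h1, h2⟩ <;> have := hl i <;>
            simp only [Pi.sub_apply] <;> omega
        · have h0 : χ i0 = 0 := by
            rcases hχval i0 with ⟨h1, h2⟩ | ⟨h1, _⟩
            · omega
            · exact h1
          simp only [Pi.sub_apply, h0, hi0]; ring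
        · have hcast : ((M - 1 : ℕ) : ℤ) = (M : ℤ) - 1 := by omega
          rcases hχval i with ⟨h1, h2⟩ | ⟨h1, h2⟩ <;> have h3 := hu i <;>
            simp only [Pi.sub_apply] <;> omega

lemma gq_eq (b : Fin N → EuclideanSpace ℝ (Fin m)) (z : Fin N → ℝ) (w : Fin N → ℤ) :
    gq b z w = ‖(∑ i, z i • b i) - ∑ i, (w i : ℝ) • b i‖ ^ 2 := rfl

lemma mem_lattice {n : ℕ} (b : Fin (n+1) → EuclideanSpace ℝ (Fin m))
    (hsum : ∑ i, b i = 0) (w : Fin (n+1) → ℤ) :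
    (∑ i, (w i : ℝ) • b i)
      = ∑ i : Fin n, ((w i.castSucc - w (Fin.last n) : ℤ) : ℝ) • b i.castSucc := by
  calc (∑ i, (w i : ℝ) • b i) = Bv b (fun i => (w i : ℝ)) := rfl
  _ = Tmap b (fun i => (w i.castSucc : ℝ) - (w (Fin.last n) : ℝ)) := bridge b hsum _
  _ = ∑ i : Fin n, ((w i.castSucc : ℝ) - (w (Fin.last n) : ℝ)) • b i.castSucc := rfl
  _ = ∑ i : Fin n, ((w i.castSucc - w (Fin.last n) : ℤ) : ℝ) • b i.castSucc := by
      refine Finset.sum_congr rfl fun i _ => ?_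
      congr 1
      push_cast
      ring

lemma lattice_as_Cv {n : ℕ} (b : Fin (n+1) → EuclideanSpace ℝ (Fin m))
    (hsum : ∑ i, b i = 0) (c : Fin n → ℤ) :
    (∑ i : Fin n, (c i : ℝ) • b i.castSucc) = Cv b (Fin.snoc c 0) := by
  have h1 : Cv b (Fin.snoc c 0)
      = Tmap b (fun i => (((Fin.snoc c 0 : Fin (n+1) → ℤ) i.castSucc : ℤ) : ℝ)
          - (((Fin.snoc c 0 : Fin (n+1) → ℤ) (Fin.last n) : ℤ) : ℝ)) := bridge b hsum _
  rw [h1]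
  show _ = ∑ i : Fin n, ((((Fin.snoc c 0 : Fin (n+1) → ℤ) i.castSucc : ℤ) : ℝ)
      - (((Fin.snoc c 0 : Fin (n+1) → ℤ) (Fin.last n) : ℤ) : ℝ)) • b i.castSucc
  refine Finset.sum_congr rfl fun i _ => ?_
  congr 1
  simp [Fin.snoc_castSucc, Fin.snoc_last]

end VFK

/-- for a lattice of Voronoi's first kind with obtuse superbasis, the
iteration `u_0 = ⌊z⌋`, `u_{k+1} = u_k + t_k` — where `t_k ∈ {0,1}^{n+1}` minimizes
`‖B(z − u_k − t)‖²` over `t ∈ {0,1}^{n+1}` — reaches a closest lattice point to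
`y = Bz` within `n` steps: there is `K ≤ n` with `B u_K` a closest lattice point. -/
theorem iteration_terminates_in_n_steps
    (n m : ℕ) (b : Fin (n + 1) → EuclideanSpace ℝ (Fin m))
    (hb : LinearIndependent ℝ (fun i : Fin n => b i.castSucc))
    (Λ : Set (EuclideanSpace ℝ (Fin m)))
    (hΛ : Λ = {x | ∃ u : Fin n → ℤ, x = ∑ i, (u i : ℝ) • b i.castSucc})
    (hsum : ∑ i, b i = 0)
    (hobtuse : ∀ i j, i ≠ j → ⟪b i, b j⟫ ≤ 0)
    (z : Fin (n + 1) → ℝ)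
    (u : ℕ → Fin (n + 1) → ℤ)
    (hu0 : u 0 = fun i => ⌊z i⌋)
    (hstep : ∀ k, ∃ t : Fin (n + 1) → ℤ, (∀ i, t i = 0 ∨ t i = 1) ∧
      u (k + 1) = u k + t ∧
      ∀ s : Fin (n + 1) → ℤ, (∀ i, s i = 0 ∨ s i = 1) →
        ‖∑ i, (z i - (u k i : ℝ) - (t i : ℝ)) • b i‖ ^ 2 ≤
          ‖∑ i, (z i - (u k i : ℝ) - (s i : ℝ)) • b i‖ ^ 2) :
    ∃ K ≤ n, (∑ i, (u K i : ℝ) • b i) ∈ Λ ∧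
      ∀ x' ∈ Λ, ‖(∑ i, z i • b i) - ∑ i, (u K i : ℝ) • b i‖ ≤ ‖(∑ i, z i • b i) - x'‖ := by
  classical
  -- step hypothesis in `gq` form
  have hstep' : ∀ k, ∃ t : Fin (n+1) → ℤ, (∀ i, t i = 0 ∨ t i = 1) ∧ u (k+1) = u k + t ∧
      ∀ s : Fin (n+1) → ℤ, (∀ i, s i = 0 ∨ s i = 1) →
        VFK.gq b z (u k + t) ≤ VFK.gq b z (u k + s) := by
    intro k
    obtain ⟨t, ht01, huk, hmin⟩ := hstep k
    refine ⟨t, ht01, huk, fun s hs => ?_⟩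
    have h := hmin s hs
    rw [VFK.conv_sum b z (u k) t, VFK.conv_sum b z (u k) s] at h
    exact h
  -- floor facts
  have hfl : ∀ i, ((u 0 i : ℝ) ≤ z i ∧ z i < u 0 i + 1) := by
    intro i
    rw [hu0]
    exact ⟨Int.floor_le _, Int.lt_floor_add_one _⟩
  -- base : a global minimizer within `[u 0, u 0 + n]`
  obtain ⟨v0, hv0⟩ := VFK.exists_glob_min b hb hsum (VFK.Bv b z)
  have hv0' : ∀ w, VFK.gq b z v0 ≤ VFK.gq b z w := by
    intro w
    exact pow_le_pow_left₀ (norm_nonneg _) (hv0 w) 2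
  have hneim : (Finset.image (fun i => v0 i - u 0 i) Finset.univ).Nonempty :=
    (Finset.univ_nonempty).image _
  set c0 : ℤ := Finset.min' _ hneim with hc0
  set v1 : Fin (n+1) → ℤ := fun i => v0 i - c0 with hv1
  have hv1glob : ∀ w, VFK.gq b z v1 ≤ VFK.gq b z w := by
    intro w
    have he : v1 = v0 + fun _ => -c0 := by funext i; simp [hv1]; ring
    rw [he, VFK.gq_shift b hsum z v0 (-c0)]
    exact hv0' w
  have hl1 : ∀ i, u 0 i ≤ v1 i := by
    intro i
    have h : c0 ≤ v0 i - u 0 i := Finset.min'_le _ _ (Finset.mem_image_of_mem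
      (fun i => v0 i - u 0 i) (Finset.mem_univ i))
    show u 0 i ≤ v0 i - c0
    omega
  have hex1 : ∃ i0, v1 i0 = u 0 i0 := by
    obtain ⟨i0, _, hmin'⟩ := Finset.mem_image.mp (Finset.min'_mem _ hneim)
    have h2 : v0 i0 - u 0 i0 = c0 := hmin'
    exact ⟨i0, by show v0 i0 - c0 = u 0 i0; omega⟩
  have hneim2 : (Finset.image (fun i => v1 i - u 0 i) Finset.univ).Nonempty :=
    (Finset.univ_nonempty).image _
  set M0 : ℤ := Finset.max' _ hneim2 with hM0
  have hub1 : ∀ i, v1 i - u 0 i ≤ M0 := by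
    intro i
    exact Finset.le_max' (Finset.image (fun i => v1 i - u 0 i) Finset.univ) (v1 i - u 0 i)
      (Finset.mem_image_of_mem (fun i => v1 i - u 0 i) (Finset.mem_univ i))
  have hM0nn : 0 ≤ M0 := by
    obtain ⟨iw, _, hiw⟩ := Finset.mem_image.mp (Finset.max'_mem _ hneim2)
    have := hl1 iw
    omega
  obtain ⟨v2, hglob2, hl2, hu2⟩ := VFK.gap_descent b hsum hobtuse z (u 0) hfl M0.toNat v1
    hv1glob hl1 hex1 (fun i => by have := hub1 i; omega)
  -- the invariant, by induction on k
  have main : ∀ k : ℕ, k ≤ n → ∃ v : Fin (n+1) → ℤ,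
      (∀ w, VFK.gq b z v ≤ VFK.gq b z w) ∧
      (∀ i, u k i ≤ v i) ∧ (∀ i, v i ≤ u k i + ((n : ℤ) - k)) := by
    intro k
    induction k with
    | zero =>
      intro _
      refine ⟨v2, hglob2, hl2, fun i => ?_⟩
      have := hu2 i
      push_cast at this ⊢
      omega
    | succ k IH =>
      intro hk
      obtain ⟨v, hvg, hvl, hvu⟩ := IH (by omega)
      obtain ⟨t, ht01, hukk, hmin⟩ := hstep' k
      obtain ⟨v', h1, h2, h3⟩ := VFK.steplem b hsum hobtuse z (u k) t v ((n : ℤ) - k)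
        (by omega) ht01 hvl hvu hmin hvg
      refine ⟨v', h1, fun i => ?_, fun i => ?_⟩
      · rw [hukk]; exact h2 i
      · rw [hukk]
        have := h3 i
        push_cast at this ⊢
        omega
  obtain ⟨v, hvg, hvl, hvu⟩ := main n le_rfl
  have hveq : v = u n := by
    funext i
    have h1 := hvl i
    have h2 := hvu i
    omega
  rw [hveq] at hvg
  refine ⟨n, le_rfl, ?_, ?_⟩
  · rw [hΛ]
    exact ⟨fun i => u n i.castSucc - u n (Fin.last n), VFK.mem_lattice b hsum (u n)⟩
  · intro x' hx'
    rw [hΛ] at hx'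
    obtain ⟨cw, hcw⟩ := hx'
    have hx'eq : x' = VFK.Cv b (Fin.snoc cw 0) := by
      rw [hcw]
      exact VFK.lattice_as_Cv b hsum cw
    have hkey := hvg (Fin.snoc cw 0)
    rw [VFK.gq_eq, VFK.gq_eq] at hkey
    have h1 : ‖(∑ i, z i • b i) - ∑ i, (u n i : ℝ) • b i‖ ^ 2
        ≤ ‖(∑ i, z i • b i) - x'‖ ^ 2 := by
      rw [hx'eq]
      calc ‖(∑ i, z i • b i) - ∑ i, (u n i : ℝ) • b i‖ ^ 2
          ≤ ‖(∑ i, z i • b i) - ∑ i, (((Fin.snoc cw 0 : Fin (n+1) → ℤ) i : ℤ) : ℝ) • b i‖ ^ 2 := hkey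
      _ = ‖(∑ i, z i • b i) - VFK.Cv b (Fin.snoc cw 0)‖ ^ 2 := rfl
    nlinarith [norm_nonneg ((∑ i, z i • b i) - ∑ i, (u n i : ℝ) • b i),
      norm_nonneg ((∑ i, z i • b i) - x')]
end

section
/- Let q be a symmetric (n+1)×(n+1) real matrix with q_{ij} ≤ 0 for i ≠ j and with every row summing to zero, and let s ∈ ℝ^{n+1}. Define Q(t) = ∑_{i=1}^{n+1} s_i t_i + ∑_{i=1}^{n+1}∑_{j=1}^{n+1} q_{ij} t_i t_j for t ∈ {0,1}^{n+1}. Define symmetric weights on vertices {0, 1, …, n+2} by: w_{ij} = −q_{ij} for 1 ≤ i, j ≤ n+1; w_{i,n+2} = max(s_i, 0) and w_{0,i} = max(−s_i, 0) for 1 ≤ i ≤ n+1; and w_{0,0} = w_{n+2,n+2} = w_{0,n+2} = 0. Then all weights w_{ij} with i ≠ j are nonnegative, and there exists a constant c (independent of t) such that for every t ∈ {0,1}^{n+1}, the weight W of the cut determined by t — namely W = ∑_{i,j=0}^{n+2} w_{ij} t_i (1 − t_j) with the convention t_0 = 1 and t_{n+2} = 0 — satisfies W = Q(t) + c. Consequently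 t minimizes Q over {0,1}^{n+1} if and only if the corresponding cut has minimum weight. -/
open Finset

private lemma mySplit (n : ℕ) (f : ℕ → ℝ) :
    ∑ i ∈ Icc 0 (n + 2), f i = f 0 + f (n + 2) + ∑ i ∈ Icc 1 (n + 1), f i := by
  have h : Icc 0 (n + 2) = insert 0 (insert (n + 2) (Icc 1 (n + 1))) := by
    ext i; simp only [mem_Icc, mem_insert]; omega
  rw [h, sum_insert (by simp only [mem_insert, mem_Icc]; omega),
    sum_insert (by simp only [mem_Icc]; omega)]
  ring

private lemma cut_identity (n : ℕ) (q : ℕ → ℕ → ℝ) (s : ℕ → ℝ) (w : ℕ → ℕ → ℝ)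
    (hrows : ∀ i ∈ Icc 1 (n + 1), ∑ j ∈ Icc 1 (n + 1), q i j = 0)
    (hw_mid : ∀ i ∈ Icc 1 (n + 1), ∀ j ∈ Icc 1 (n + 1), w i j = -q i j)
    (hw_sink : ∀ i ∈ Icc 1 (n + 1), w i (n + 2) = max (s i) 0)
    (hw_source : ∀ i ∈ Icc 1 (n + 1), w 0 i = max (-s i) 0)
    (hw00 : w 0 0 = 0) (hw0n : w 0 (n + 2) = 0)
    (t : ℕ → ℝ) (ht0 : t 0 = 1) (htn : t (n + 2) = 0) :
    (∑ i ∈ Icc 0 (n + 2), ∑ j ∈ Icc 0 (n + 2), w i j * t i * (1 - t j)) =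
      ((∑ i ∈ Icc 1 (n + 1), s i * t i) +
        ∑ i ∈ Icc 1 (n + 1), ∑ j ∈ Icc 1 (n + 1), q i j * t i * t j) +
      ∑ i ∈ Icc 1 (n + 1), max (-s i) 0 := by
  rw [mySplit n (fun i => ∑ j ∈ Icc 0 (n + 2), w i j * t i * (1 - t j))]
  have hA : ∑ j ∈ Icc 0 (n + 2), w 0 j * t 0 * (1 - t j)
      = ∑ j ∈ Icc 1 (n + 1), max (-s j) 0 * (1 - t j) := by
    rw [mySplit, hw00, hw0n, ht0, htn]
    have h1 : ∑ j ∈ Icc 1 (n + 1), w 0 j * 1 * (1 - t j)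
        = ∑ j ∈ Icc 1 (n + 1), max (-s j) 0 * (1 - t j) :=
      sum_congr rfl fun j hj => by rw [hw_source j hj]; ring
    rw [h1]; ring
  have hB : ∑ j ∈ Icc 0 (n + 2), w (n + 2) j * t (n + 2) * (1 - t j) = 0 := by
    apply sum_eq_zero; intro j _; rw [htn]; ring
  have hC : ∀ i ∈ Icc 1 (n + 1), ∑ j ∈ Icc 0 (n + 2), w i j * t i * (1 - t j)
      = max (s i) 0 * t i + ∑ j ∈ Icc 1 (n + 1), q i j * t i * t j := by
    intro i hi
    rw [mySplit, ht0, htn, hw_sink i hi]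
    have h1 : ∑ j ∈ Icc 1 (n + 1), w i j * t i * (1 - t j)
        = (∑ j ∈ Icc 1 (n + 1), q i j * t i * t j) - (∑ j ∈ Icc 1 (n + 1), q i j) * t i := by
      rw [Finset.sum_mul, ← Finset.sum_sub_distrib]
      exact sum_congr rfl fun j hj => by rw [hw_mid i hi j hj]; ring
    rw [h1, hrows i hi]; ring
  rw [hA, hB, sum_congr rfl hC, sum_add_distrib]
  have key : ∀ i, max (-s i) 0 * (1 - t i) + max (s i) 0 * t i = s i * t i + max (-s i) 0 := by
    intro i
    have h : max (s i) 0 - max (-s i) 0 = s i := by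
      rcases le_total (s i) 0 with h | h
      · rw [max_eq_right h, max_eq_left (by linarith)]; ring
      · rw [max_eq_left h, max_eq_right (by linarith)]; ring
    linear_combination (t i) * h
  have hfin : ∑ i ∈ Icc 1 (n + 1), (max (-s i) 0 * (1 - t i) + max (s i) 0 * t i)
      = ∑ i ∈ Icc 1 (n + 1), (s i * t i + max (-s i) 0) :=
    sum_congr rfl fun i _ => key i
  rw [sum_add_distrib, sum_add_distrib] at hfin
  linarith

/-- minimizing the binary quadratic form
`Q(t) = ∑ s_i t_i + ∑∑ q_{ij} t_i t_j` (with `q` symmetric, obtuse off the diagonal and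
with zero row sums) is equivalent to finding a minimum cut in the undirected flow network
on vertices `{0, 1, …, n+2}` with weights `w_{ij} = −q_{ij}` (`1 ≤ i, j ≤ n+1`),
`w_{i,n+2} = max(s_i, 0)`, `w_{0,i} = max(−s_i, 0)` and
`w_{0,0} = w_{n+2,n+2} = w_{0,n+2} = 0`: all off-diagonal weights are nonnegative and the
cut weight `W = ∑_{i,j=0}^{n+2} w_{ij} t_i (1 − t_j)` (with `t_0 = 1`, `t_{n+2} = 0`)
equals `Q(t) + c` for a constant `c` independent of `t`; hence `t` minimizes `Q` over
`{0,1}^{n+1}` if and only if the corresponding cut has minimum weight. -/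
theorem min_binary_quadratic_form_eq_min_cut
    (n : ℕ) (q : ℕ → ℕ → ℝ) (s : ℕ → ℝ) (w : ℕ → ℕ → ℝ)
    (hsym : ∀ i ∈ Icc 1 (n + 1), ∀ j ∈ Icc 1 (n + 1), q i j = q j i)
    (hobtuse : ∀ i ∈ Icc 1 (n + 1), ∀ j ∈ Icc 1 (n + 1), i ≠ j → q i j ≤ 0)
    (hrows : ∀ i ∈ Icc 1 (n + 1), ∑ j ∈ Icc 1 (n + 1), q i j = 0)
    (hwsym : ∀ i ∈ Icc 0 (n + 2), ∀ j ∈ Icc 0 (n + 2), w i j = w j i)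
    (hw_mid : ∀ i ∈ Icc 1 (n + 1), ∀ j ∈ Icc 1 (n + 1), w i j = -q i j)
    (hw_sink : ∀ i ∈ Icc 1 (n + 1), w i (n + 2) = max (s i) 0)
    (hw_source : ∀ i ∈ Icc 1 (n + 1), w 0 i = max (-s i) 0)
    (hw00 : w 0 0 = 0) (hwnn : w (n + 2) (n + 2) = 0) (hw0n : w 0 (n + 2) = 0) :
    (∀ i ∈ Icc 0 (n + 2), ∀ j ∈ Icc 0 (n + 2), i ≠ j → 0 ≤ w i j) ∧
    (∃ c : ℝ, ∀ t : ℕ → ℝ,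
      (∀ i ∈ Icc 1 (n + 1), t i = 0 ∨ t i = 1) → t 0 = 1 → t (n + 2) = 0 →
      (∑ i ∈ Icc 0 (n + 2), ∑ j ∈ Icc 0 (n + 2), w i j * t i * (1 - t j)) =
        ((∑ i ∈ Icc 1 (n + 1), s i * t i) +
          ∑ i ∈ Icc 1 (n + 1), ∑ j ∈ Icc 1 (n + 1), q i j * t i * t j) + c) ∧
    (∀ t : ℕ → ℝ,
      (∀ i ∈ Icc 1 (n + 1), t i = 0 ∨ t i = 1) → t 0 = 1 → t (n + 2) = 0 →
      ((∀ t' : ℕ → ℝ, (∀ i ∈ Icc 1 (n + 1), t' i = 0 ∨ t' i = 1) → t' 0 = 1 →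
          t' (n + 2) = 0 →
          (∑ i ∈ Icc 1 (n + 1), s i * t i) +
              (∑ i ∈ Icc 1 (n + 1), ∑ j ∈ Icc 1 (n + 1), q i j * t i * t j) ≤
            (∑ i ∈ Icc 1 (n + 1), s i * t' i) +
              ∑ i ∈ Icc 1 (n + 1), ∑ j ∈ Icc 1 (n + 1), q i j * t' i * t' j) ↔
        (∀ t' : ℕ → ℝ, (∀ i ∈ Icc 1 (n + 1), t' i = 0 ∨ t' i = 1) → t' 0 = 1 →
          t' (n + 2) = 0 →
          (∑ i ∈ Icc 0 (n + 2), ∑ j ∈ Icc 0 (n + 2), w i j * t i * (1 - t j)) ≤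
            ∑ i ∈ Icc 0 (n + 2), ∑ j ∈ Icc 0 (n + 2), w i j * t' i * (1 - t' j)))) := by

  constructor
  · -- nonnegativity of off-diagonal weights
    intro i hi j hj hij
    have hi' : i = 0 ∨ i = n + 2 ∨ i ∈ Icc 1 (n + 1) := by
      simp only [mem_Icc] at hi ⊢; omega
    have hj' : j = 0 ∨ j = n + 2 ∨ j ∈ Icc 1 (n + 1) := by
      simp only [mem_Icc] at hj ⊢; omega
    rcases hi' with rfl | rfl | hiI <;> rcases hj' with rfl | rfl | hjI
    · exact absurd rfl hij
    · rw [hw0n]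
    · rw [hw_source j hjI]; exact le_max_right _ _
    · rw [hwsym _ hi _ hj, hw0n]
    · exact absurd rfl hij
    · rw [hwsym _ hi _ hj, hw_sink j hjI]; exact le_max_right _ _
    · rw [hwsym _ hi _ hj, hw_source i hiI]; exact le_max_right _ _
    · rw [hw_sink i hiI]; exact le_max_right _ _
    · rw [hw_mid i hiI j hjI, neg_nonneg]; exact hobtuse i hiI j hjI hij
  constructor
  · -- the identity with the constant c
    refine ⟨∑ i ∈ Icc 1 (n + 1), max (-s i) 0, fun t _ ht0 htn => ?_⟩
    exact cut_identity n q s w hrows hw_mid hw_sink hw_source hw00 hw0n t ht0 htn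
  · -- equivalence of the minimization problems
    intro t ht ht0 htn
    constructor
    · intro h t' ht' ht0' htn'
      have h1 := cut_identity n q s w hrows hw_mid hw_sink hw_source hw00 hw0n t ht0 htn
      have h2 := cut_identity n q s w hrows hw_mid hw_sink hw_source hw00 hw0n t' ht0' htn'
      have h3 := h t' ht' ht0' htn'
      linarith
    · intro h t' ht' ht0' htn'
      have h1 := cut_identity n q s w hrows hw_mid hw_sink hw_source hw00 hw0n t ht0 htn
      have h2 := cut_identity n q s w hrows hw_mid hw_sink hw_source hw00 hw0n t' ht0' htn'
      have h3 := h t' ht' ht0' htn'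
      linarith
end
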